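/- arXiv:2110.08964 — 9 statements merged into one kernel-verified Lean document; each statement's English description precedes it below -/
import Mathlib

section
/- Let q be a prime power, n ≥ 1, a₁,…,aₙ ∈ F_q and b_{i,j} ∈ F_{q^2} for 1 ≤ i,j ≤ n. The system of equations X_i^{q+1} = a_i (for all i) and X_i X_j^q = b_{i,j} (for all i,j) has at most q+1 solutions (X₁,…,Xₙ) ∈ F_{q^2}ⁿ. -/
/-- The system X_i^{q+1} = a_i, X_i X_j^q = b_{i,j} has at most q+1 solutions in F_{q²}ⁿ. -/
theorem stmt3 (q : ℕ) (hq : ∃ p n : ℕ, p.Prime ∧ 0 < n ∧ q = p ^ n)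
    (K : Type*) [Field K] [Fintype K] (hK : Fintype.card K = q ^ 2)
    (n : ℕ) (hn : 1 ≤ n) (a : Fin n → K) (ha : ∀ i, (a i) ^ q = a i)
    (b : Fin n → Fin n → K) :
    {x : Fin n → K | (∀ i, x i ^ (q + 1) = a i) ∧ ∀ i j, x i * (x j) ^ q = b i j}.ncard
      ≤ q + 1 := by
  classical
  have hq2 : 2 ≤ q := by
    obtain ⟨p, m, hp, hm, rfl⟩ := hq
    calc 2 ≤ p := hp.two_le
    _ ≤ p ^ m := Nat.le_self_pow hm.ne' p
  have hcop : Nat.Coprime q (q ^ 2 - 1) := by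
    have h1 : Nat.Coprime (q ^ 2) (q ^ 2 - 1) := by
      have h2 : q ^ 2 - 1 + 1 = q ^ 2 :=
        Nat.succ_pred_eq_of_pos (pow_pos (by omega : 0 < q) 2)
      rw [← h2]
      exact Nat.coprime_self_add_left.mpr (Nat.coprime_one_left _)
    exact Nat.Coprime.coprime_dvd_left (dvd_pow_self q two_ne_zero) h1
  have hpowinj : ∀ y z : K, y ^ q = z ^ q → y = z := by
    intro y z h
    rcases eq_or_ne z 0 with rfl | hz
    · rw [zero_pow (by omega : q ≠ 0)] at h
      exact pow_eq_zero_iff (by omega : q ≠ 0) |>.mp h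
    · have hc0 : y / z ≠ 0 := by
        refine div_ne_zero ?_ hz
        intro h0
        rw [h0, zero_pow (by omega : q ≠ 0)] at h
        exact hz (pow_eq_zero_iff (by omega : q ≠ 0) |>.mp h.symm)
      have hcq : (y / z) ^ q = 1 := by
        rw [div_pow, h, div_self (pow_ne_zero _ hz)]
      have hcard : (y / z) ^ (q ^ 2 - 1) = 1 := by
        have := FiniteField.pow_card_sub_one_eq_one (y / z) hc0
        rwa [hK] at this
      have h1 : orderOf (y / z) ∣ q := orderOf_dvd_of_pow_eq_one hcq
      have h2 : orderOf (y / z) ∣ q ^ 2 - 1 := orderOf_dvd_of_pow_eq_one hcard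
      have : orderOf (y / z) = 1 :=
        Nat.eq_one_of_dvd_coprimes hcop h1 h2
      have := orderOf_eq_one_iff.mp this
      field_simp at this
      exact this
  set S : Set (Fin n → K) :=
    {x : Fin n → K | (∀ i, x i ^ (q + 1) = a i) ∧ ∀ i j, x i * (x j) ^ q = b i j} with hSdef
  rcases S.eq_empty_or_nonempty with hS | ⟨x, hx⟩
  · simp [hS]
  by_cases hx0 : ∀ i, x i = 0
  · have hsub : S ⊆ {x} := by
      intro y hy
      simp only [Set.mem_singleton_iff]
      funext j
      have h1 : y j ^ (q + 1) = a j := hy.1 j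
      have h2 : x j ^ (q + 1) = a j := hx.1 j
      rw [hx0 j, zero_pow (by omega : q + 1 ≠ 0)] at h2
      rw [← h2] at h1
      rw [hx0 j]
      exact pow_eq_zero_iff (by omega : q + 1 ≠ 0) |>.mp h1
    calc S.ncard ≤ ({x} : Set (Fin n → K)).ncard :=
          Set.ncard_le_ncard hsub (Set.finite_singleton x)
    _ = 1 := Set.ncard_singleton x
    _ ≤ q + 1 := by omega
  · push_neg at hx0
    obtain ⟨i₀, hi₀⟩ := hx0
    have hne : ∀ y ∈ S, y i₀ ≠ 0 := by
      intro y hy h0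
      apply hi₀
      have h1 : y i₀ ^ (q + 1) = a i₀ := hy.1 i₀
      have h2 : x i₀ ^ (q + 1) = a i₀ := hx.1 i₀
      rw [h0, zero_pow (by omega : q + 1 ≠ 0)] at h1
      exact pow_eq_zero_iff (by omega : q + 1 ≠ 0) |>.mp (h2.trans h1.symm)
    have hinj : Set.InjOn (fun y : Fin n → K => y i₀) S := by
      intro y hy z hz hyz
      funext j
      have h1 : y i₀ * y j ^ q = b i₀ j := hy.2 i₀ j
      have h2 : z i₀ * z j ^ q = b i₀ j := hz.2 i₀ j
      apply hpowinj
      have h3 := h1.trans h2.symm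
      simp only at hyz
      rw [hyz] at h3
      exact mul_left_cancel₀ (hne z hz) h3
    set P : Polynomial K := Polynomial.X ^ (q + 1) - Polynomial.C (a i₀) with hPdef
    have hPdeg : P.natDegree = q + 1 := by
      rw [hPdef]
      exact Polynomial.natDegree_X_pow_sub_C
    have hP0 : P ≠ 0 := by
      intro h
      rw [h, Polynomial.natDegree_zero] at hPdeg
      omega
    have himg : (fun y : Fin n → K => y i₀) '' S ⊆ ↑P.roots.toFinset := by
      rintro c ⟨y, hy, rfl⟩
      simp only [Finset.coe_sort_coe, Multiset.mem_toFinset, Finset.mem_coe,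
        Polynomial.mem_roots hP0, Polynomial.IsRoot, hPdef]
      simp [sub_eq_zero, hy.1 i₀]
      rw [hPdef] at hP0
      exact sub_ne_zero.mp hP0
    calc S.ncard = ((fun y : Fin n → K => y i₀) '' S).ncard :=
          (Set.ncard_image_of_injOn hinj).symm
    _ ≤ (↑P.roots.toFinset : Set K).ncard :=
          Set.ncard_le_ncard himg (P.roots.toFinset.finite_toSet)
    _ = P.roots.toFinset.card := Set.ncard_coe_finset _
    _ ≤ Multiset.card P.roots := Multiset.toFinset_card_le _
    _ ≤ P.natDegree := Polynomial.card_roots' P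
    _ = q + 1 := hPdeg
end

section
/- Let q be a prime power and ℓ ≥ 1. The number of invertible ℓ × ℓ Hermitian matrices over F_{q^2} equals q^{C(ℓ,2)} · ∏_{i=1}^{ℓ} (q^i + (-1)^i). -/
open Matrix Polynomial Finset

namespace HermCount

variable {q : ℕ} {K : Type*} [Field K] [Fintype K] [DecidableEq K]

/-- basic package of facts about `x ↦ x^q` on a field of cardinality `q^2`. -/
structure Pkg (q : ℕ) (K : Type*) [Field K] [Fintype K] [DecidableEq K] : Prop where
  hq2 : 2 ≤ q
  hcard : Fintype.card K = q ^ 2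
  hadd : ∀ x y : K, (x + y) ^ q = x ^ q + y ^ q
  hfix : (Finset.univ.filter fun x : K => x ^ q = x).card = q

theorem pkg_of (hq : ∃ p n : ℕ, p.Prime ∧ 0 < n ∧ q = p ^ n)
    (hK : Fintype.card K = q ^ 2) : Pkg q K := by
  obtain ⟨p, n, hp, hn, rfl⟩ := hq
  have hq2 : 2 ≤ p ^ n := by
    calc 2 ≤ p := hp.two_le
    _ = p ^ 1 := (pow_one p).symm
    _ ≤ p ^ n := Nat.pow_le_pow_right hp.pos hn
  -- char K = p
  obtain ⟨p', hcp'⟩ := CharP.exists K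
  haveI := hcp'
  have hp' : p'.Prime := CharP.char_is_prime K p'
  haveI : Fact p'.Prime := ⟨hp'⟩
  obtain ⟨m, hm⟩ := FiniteField.card K p'
  have hpp' : p' = p := by
    have h1 : p' ∣ p ^ (n * 2) := by
      rw [pow_mul, ← hK, hm.2]
      exact dvd_pow_self p' m.2.ne'
    exact (Nat.prime_dvd_prime_iff_eq hp' hp).mp (hp'.dvd_of_dvd_pow h1)
  haveI hcp : CharP K p := hpp' ▸ hcp'
  haveI : Fact p.Prime := ⟨hp⟩
  have hadd : ∀ x y : K, (x + y) ^ p ^ n = x ^ p ^ n + y ^ p ^ n := fun x y =>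
    add_pow_char_pow x y p n
  refine ⟨hq2, hK, hadd, ?_⟩
  -- count fixed points of x ↦ x^q via roots of X^q - X
  set q := p ^ n with hqdef
  have hq1 : (1 : ℕ) < q := hq2
  set f : K[X] := X ^ q - X with hf
  have hfq : f ^ q + f = X ^ (q ^ 2) - X := by
    have h1 : f ^ q = (X : K[X]) ^ (q^2) - X ^ q := by
      rw [hf, hqdef, sub_pow_char_pow]
      rw [← pow_mul, sq]
    rw [h1, hf]; ring
  have hdvd : f ∣ X ^ (q ^ 2) - X := by
    refine ⟨f ^ (q - 1) + 1, ?_⟩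
    rw [mul_add, mul_one, ← pow_succ', Nat.sub_add_cancel (by omega : 1 ≤ q), hfq]
  have hbig0 : (X ^ (q ^ 2) - X : K[X]) ≠ 0 := by
    rw [← hK]; exact FiniteField.X_pow_card_sub_X_ne_zero K (hK ▸ (by nlinarith : 1 < q ^ 2))
  have hroots_big : (X ^ (q ^ 2) - X : K[X]).roots = Finset.univ.val := by
    rw [← hK]; exact FiniteField.roots_X_pow_card_sub_X K
  have hsplits_big : Splits (X ^ (q ^ 2) - X : K[X]) := by
    rw [splits_iff_card_roots, hroots_big, ← Finset.card_def, Finset.card_univ, hK]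
    rw [← hK]; exact (FiniteField.X_pow_card_sub_X_natDegree_eq K (hK ▸ (by nlinarith : 1 < q^2))).symm
  have hsplits_f : Splits f :=
    hsplits_big.of_dvd hbig0 hdvd
  have hdegf : f.natDegree = q := FiniteField.X_pow_card_sub_X_natDegree_eq K hq1
  have hf0 : f ≠ 0 := FiniteField.X_pow_card_sub_X_ne_zero K hq1
  have hcardroots : Multiset.card f.roots = q := by
    rw [(splits_iff_card_roots).mp hsplits_f, hdegf]
  have hnodup : f.roots.Nodup := by
    have hle : f.roots ≤ (X ^ (q ^ 2) - X : K[X]).roots :=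
      Polynomial.roots.le_of_dvd hbig0 hdvd
    rw [hroots_big] at hle
    exact Multiset.nodup_of_le hle Finset.univ.nodup
  have : (Finset.univ.filter fun x : K => x ^ q = x) = ⟨f.roots, hnodup⟩ := by
    ext x
    simp only [Finset.mem_filter, Finset.mem_univ, true_and, Finset.mem_mk,
      Polynomial.mem_roots hf0, Polynomial.mem_roots (hf ▸ hf0 : (X ^ q - X : K[X]) ≠ 0), IsRoot.def, hf, eval_sub, eval_pow, eval_X, sub_eq_zero]
  rw [this, Finset.card_mk, hcardroots]


section Conj
variable (hP : Pkg q K)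
include hP

lemma conj_conj (x : K) : (x ^ q) ^ q = x := by
  rw [← pow_mul, ← sq, ← hP.hcard, FiniteField.pow_card]

lemma conj_zero : (0 : K) ^ q = 0 := zero_pow (by have := hP.hq2; omega)

lemma conj_sum {ι : Type*} (s : Finset ι) (f : ι → K) :
    (∑ i ∈ s, f i) ^ q = ∑ i ∈ s, (f i) ^ q := by
  classical
  induction s using Finset.induction_on with
  | empty => simpa using conj_zero hP
  | insert _ _ h ih => rw [Finset.sum_insert h, Finset.sum_insert h, hP.hadd, ih]

lemma conj_neg (x : K) : (-x) ^ q = -(x ^ q) := by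
  have h : (0:K) ^ q = x ^ q + (-x) ^ q := by
    rw [← hP.hadd]; ring_nf
  rw [conj_zero hP] at h
  linear_combination -h

lemma conj_sub (x y : K) : (x - y) ^ q = x ^ q - y ^ q := by
  rw [sub_eq_add_neg, hP.hadd, conj_neg hP, ← sub_eq_add_neg]

lemma conj_inj {x y : K} (h : x ^ q = y ^ q) : x = y := by
  rw [← conj_conj hP x, h, conj_conj hP]

end Conj

variable (q) in
/-- conjugate transpose w.r.t. `x ↦ x^q` -/
def ct {a b : Type*} (M : Matrix a b K) : Matrix b a K :=
  Matrix.of fun i j => (M j i) ^ q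

@[simp] lemma ct_apply {a b : Type*} (M : Matrix a b K) (i : b) (j : a) :
    ct q M i j = (M j i) ^ q := rfl

section CT
variable (hP : Pkg q K)
include hP

lemma ct_ct {a b : Type*} (M : Matrix a b K) : ct q (ct q M) = M := by
  ext i j; simp [conj_conj hP]

lemma ct_mul {a b c : Type*} [Fintype b] (M : Matrix a b K) (N : Matrix b c K) :
    ct q (M * N) = ct q N * ct q M := by
  ext i j
  simp only [ct_apply, Matrix.mul_apply, conj_sum hP, mul_pow]
  exact Finset.sum_congr rfl fun k _ => mul_comm _ _

lemma ct_one {a : Type*} [Fintype a] [DecidableEq a] : ct q (1 : Matrix a a K) = 1 := by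
  ext i j
  by_cases h : i = j <;>
    simp [ct_apply, Matrix.one_apply, h, eq_comm, one_pow, conj_zero hP]

end CT

variable (q) in
/-- the hermitian condition -/
def Cond {n : Type*} (H : Matrix n n K) : Prop := ∀ i j, H j i = (H i j) ^ q

lemma cond_iff_ct (hP : Pkg q K) {n : Type*} (H : Matrix n n K) :
    Cond q H ↔ ct q H = H := by
  constructor
  · intro h; ext i j; rw [ct_apply, ← h]
  · intro h i j
    conv_lhs => rw [← h]
    rfl

variable (q K) in
/-- number of invertible hermitian matrices indexed by `n` -/
noncomputable def NN (n : Type*) [Fintype n] [DecidableEq n] : ℕ :=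
  Nat.card {H : Matrix n n K // Cond q H ∧ IsUnit H}

lemma NN_reindex {n m : Type*} [Fintype n] [Fintype m] [DecidableEq n] [DecidableEq m]
    (e : n ≃ m) : NN q K n = NN q K m := by
  apply Nat.card_congr
  have h1 : ∀ (H : Matrix n n K), Cond q H → Cond q (Matrix.reindex e e H) := by
    intro H h i j
    simpa using h (e.symm i) (e.symm j)
  refine (Matrix.reindex e e).subtypeEquiv (fun H => ?_)
  constructor
  · rintro ⟨hc, hu⟩
    refine ⟨h1 H hc, ?_⟩
    rw [Matrix.isUnit_iff_isUnit_det] at hu ⊢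
    rwa [Matrix.det_reindex_self]
  · rintro ⟨hc, hu⟩
    constructor
    · intro i j
      have := hc (e i) (e j)
      simpa using this
    · rw [Matrix.isUnit_iff_isUnit_det] at hu ⊢
      rwa [Matrix.det_reindex_self] at hu

lemma NN_empty (n : Type*) [Fintype n] [DecidableEq n] [IsEmpty n] : NN q K n = 1 := by
  rw [NN, Nat.card_eq_one_iff_unique]
  constructor
  · constructor
    rintro ⟨H, _⟩ ⟨H', _⟩
    have : H = H' := by ext i j; exact isEmptyElim i
    simp [this]
  · exact ⟨⟨1, fun i => isEmptyElim i, isUnit_one⟩⟩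

lemma NN_unit (hP : Pkg q K) : NN q K Unit = q - 1 := by
  have he : {H : Matrix Unit Unit K // Cond q H ∧ IsUnit H} ≃
      {x : K // x ^ q = x ∧ x ≠ 0} := by
    refine ⟨fun H => ⟨H.1 () (), ?_, ?_⟩, fun x => ⟨Matrix.of fun _ _ => x.1, ?_, ?_⟩, ?_, ?_⟩
    · exact (H.2.1 () ()).symm
    · intro h0
      have := H.2.2
      rw [Matrix.isUnit_iff_isUnit_det, Matrix.det_unique] at this
      simp only [h0] at this
      exact not_isUnit_zero this
    · exact fun i j => x.2.1.symm
    · rw [Matrix.isUnit_iff_isUnit_det, Matrix.det_unique]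
      exact (x.2.2).isUnit
    · rintro ⟨H, h⟩; ext i j; rfl
    · rintro ⟨x, h⟩; rfl
  rw [NN, Nat.card_congr he, Nat.card_eq_fintype_card, Fintype.card_subtype]
  have : (Finset.univ.filter fun x : K => x ^ q = x ∧ x ≠ 0) =
      (Finset.univ.filter fun x : K => x ^ q = x).erase 0 := by
    ext x
    simp only [Finset.mem_filter, Finset.mem_univ, true_and, Finset.mem_erase]
    tauto
  rw [this, Finset.card_erase_of_mem, hP.hfix]
  simp only [Finset.mem_filter, Finset.mem_univ, true_and]
  exact conj_zero hP


section Blocks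

variable {n : Type*} [Fintype n] [DecidableEq n]

/-- column vector as a matrix -/
def cvec (u : n → K) : Matrix n Unit K := Matrix.of fun i _ => u i

variable (q) in
/-- conjugated row vector -/
def rvec (u : n → K) : Matrix Unit n K := Matrix.of fun _ j => (u j) ^ q

variable (q) in
/-- bordered matrix `[[0, u*],[u, A]]` -/
def bord (u : n → K) (A : Matrix n n K) : Matrix (Unit ⊕ n) (Unit ⊕ n) K :=
  Matrix.fromBlocks 0 (rvec q u) (cvec u) A

/-- generic hermitian bordered matrix with corner `c` -/
lemma cond_fromBlocks (hP : Pkg q K) (c : K) (hc : c ^ q = c) (u : n → K)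
    (D : Matrix n n K) :
    Cond q (Matrix.fromBlocks (Matrix.of fun _ _ => c) (rvec q u) (cvec u) D) ↔ Cond q D := by
  constructor
  · intro h i j
    have := h (Sum.inr i) (Sum.inr j)
    simpa using this
  · intro h i j
    rcases i with i | i <;> rcases j with j | j
    · simpa using hc.symm
    · simp [Matrix.fromBlocks, cvec, rvec, conj_conj hP]
    · simp [Matrix.fromBlocks, cvec, rvec, conj_conj hP]
    · simpa using h i j

lemma cond_bord (hP : Pkg q K) (u : n → K) (A : Matrix n n K) :
    Cond q (bord q u A) ↔ Cond q A := by
  have h0 : (Matrix.of fun (_ _ : Unit) => (0:K)) = (0 : Matrix Unit Unit K) := by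
    ext i j; rfl
  rw [bord, ← h0]
  exact cond_fromBlocks hP 0 (conj_zero hP) u A

lemma cond_outer (hP : Pkg q K) (c : K) (hc : c ^ q = c) (u : n → K) :
    Cond q (Matrix.of fun i j => u i * c⁻¹ * (u j) ^ q : Matrix n n K) := by
  intro i j
  have hcinv : (c⁻¹) ^ q = c⁻¹ := by rw [inv_pow, hc]
  simp only [Matrix.of_apply]
  rw [mul_pow, mul_pow, conj_conj hP, hcinv]
  ring

lemma cond_add (hP : Pkg q K) {A B : Matrix n n K} (hA : Cond q A) (hB : Cond q B) :
    Cond q (A + B) := by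
  intro i j
  simp only [Matrix.add_apply, hA i j, hB i j, hP.hadd]

lemma cond_sub (hP : Pkg q K) {A B : Matrix n n K} (hA : Cond q A) (hB : Cond q B) :
    Cond q (A - B) := by
  intro i j
  simp only [Matrix.sub_apply, hA i j, hB i j, conj_sub hP]

/-- reconstructing a matrix from its blocks, using hermitian symmetry -/
lemma eq_fromBlocks_corner (hP : Pkg q K) {H : Matrix (Unit ⊕ n) (Unit ⊕ n) K}
    (hcond : Cond q H) {c : K} (hcc : H (Sum.inl ()) (Sum.inl ()) = c) :
    Matrix.fromBlocks (Matrix.of fun _ _ => c)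
      (rvec q (fun i => H (Sum.inr i) (Sum.inl ()))) (cvec (fun i => H (Sum.inr i) (Sum.inl ())))
      H.toBlocks₂₂ = H := by
  ext i j
  rcases i with i | i <;> rcases j with j | j
  · simpa [Matrix.fromBlocks] using hcc.symm
  · simp only [Matrix.fromBlocks, Matrix.of_apply, Sum.elim_inl, Sum.elim_inr, rvec]
    rw [← hcond (Sum.inr j) (Sum.inl ())]
  · rfl
  · rfl

/-- Schur-complement bijection when the corner is a nonzero scalar `c`. -/
lemma card_corner_ne_zero (hP : Pkg q K) (c : K) (hc : c ^ q = c) (hc0 : c ≠ 0) :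
    Nat.card {H : Matrix (Unit ⊕ n) (Unit ⊕ n) K //
        Cond q H ∧ IsUnit H ∧ H (Sum.inl ()) (Sum.inl ()) = c}
      = Fintype.card K ^ Fintype.card n * NN q K n := by
  classical
  have key : ∀ (u : n → K) (D : Matrix n n K),
      IsUnit (Matrix.fromBlocks (Matrix.of fun _ _ => c) (rvec q u) (cvec u) D)
        ↔ IsUnit (D - Matrix.of fun i j => u i * c⁻¹ * (u j) ^ q) := by
    intro u D
    haveI : Invertible (Matrix.of fun (_ _ : Unit) => c : Matrix Unit Unit K) := by
      refine ⟨Matrix.of fun _ _ => c⁻¹, ?_, ?_⟩ <;>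
        · ext i j
          simp [Matrix.mul_apply, Matrix.one_apply, inv_mul_cancel₀ hc0, mul_inv_cancel₀ hc0]
    rw [Matrix.isUnit_iff_isUnit_det, Matrix.det_fromBlocks₁₁,
      Matrix.isUnit_iff_isUnit_det (D - _)]
    have hA : (Matrix.of fun (_ _ : Unit) => c : Matrix Unit Unit K).det = c := by
      rw [Matrix.det_unique]; rfl
    have hinv : (⅟(Matrix.of fun (_ _ : Unit) => c : Matrix Unit Unit K)) =
        Matrix.of fun _ _ => c⁻¹ := by
      apply invOf_eq_right_inv
      ext i j
      simp [Matrix.mul_apply, Matrix.one_apply, mul_inv_cancel₀ hc0]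
    have hCB : cvec u * ⅟(Matrix.of fun (_ _ : Unit) => c : Matrix Unit Unit K) * rvec q u
        = Matrix.of fun i j => u i * c⁻¹ * (u j) ^ q := by
      rw [hinv]
      ext i j
      simp [Matrix.mul_apply, cvec, rvec]
    rw [hCB, hA, isUnit_iff_ne_zero, isUnit_iff_ne_zero, mul_ne_zero_iff]
    tauto
  have he : {H : Matrix (Unit ⊕ n) (Unit ⊕ n) K //
        Cond q H ∧ IsUnit H ∧ H (Sum.inl ()) (Sum.inl ()) = c}
      ≃ (n → K) × {S : Matrix n n K // Cond q S ∧ IsUnit S} := by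
    refine ⟨fun H => ⟨fun i => H.1 (Sum.inr i) (Sum.inl ()),
      ⟨H.1.toBlocks₂₂ - Matrix.of fun i j =>
          H.1 (Sum.inr i) (Sum.inl ()) * c⁻¹ * (H.1 (Sum.inr j) (Sum.inl ())) ^ q, ?_, ?_⟩⟩,
      fun p => ⟨Matrix.fromBlocks (Matrix.of fun _ _ => c) (rvec q p.1) (cvec p.1)
          (p.2.1 + Matrix.of fun i j => p.1 i * c⁻¹ * (p.1 j) ^ q), ?_, ?_, ?_⟩, ?_, ?_⟩
    · -- Cond of S
      obtain ⟨H, hcond, hu, hcc⟩ := H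
      exact cond_sub hP (fun i j => hcond (Sum.inr i) (Sum.inr j))
        (cond_outer hP c hc _)
    · -- IsUnit S
      obtain ⟨H, hcond, hu, hcc⟩ := H
      simp only
      rw [← key]
      rw [eq_fromBlocks_corner hP hcond hcc]
      exact hu
    · -- Cond of built H
      exact (cond_fromBlocks hP c hc _ _).mpr
        (cond_add hP p.2.2.1 (cond_outer hP c hc _))
    · -- IsUnit of built H
      rw [key]
      simpa using p.2.2.2
    · rfl
    · -- left inverse
      rintro ⟨H, hcond, hu, hcc⟩
      apply Subtype.ext
      simp only [sub_add_cancel]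
      exact eq_fromBlocks_corner hP hcond hcc
    · -- right inverse
      rintro ⟨u, S, hS⟩
      refine Prod.ext rfl (Subtype.ext ?_)
      simp only [Matrix.toBlocks_fromBlocks₂₂, Matrix.fromBlocks_apply₂₁, cvec,
        Matrix.of_apply, add_sub_cancel_right]
  rw [Nat.card_congr he, Nat.card_prod, Nat.card_eq_fintype_card, Fintype.card_fun, NN]


lemma isUnit_ct {a : Type*} [Fintype a] [DecidableEq a] (hP : Pkg q K)
    {P : Matrix a a K} (h : IsUnit P) : IsUnit (ct q P) := by
  obtain ⟨V, hV⟩ := h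
  have h1 : P * (↑V⁻¹ : Matrix a a K) = 1 := by rw [← hV]; exact V.mul_inv
  have h2 : ct q (↑V⁻¹ : Matrix a a K) * ct q P = 1 := by
    rw [← ct_mul hP, h1, ct_one hP]
  exact (Matrix.isUnit_iff_isUnit_det _).mpr (Matrix.isUnit_det_of_left_inverse h2)

lemma cond_congr (hP : Pkg q K) {A : Matrix n n K} (hA : Cond q A) (P : Matrix n n K) :
    Cond q (P * A * ct q P) := by
  rw [cond_iff_ct hP] at hA ⊢
  rw [ct_mul hP, ct_mul hP, ct_ct hP, hA, Matrix.mul_assoc]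

lemma sandwich (hP : Pkg q K) {P Q : Matrix n n K} (hPQ : P * Q = 1)
    (B : Matrix n n K) : P * (Q * B * ct q Q) * ct q P = B := by
  have hct : ct q Q * ct q P = 1 := by rw [← ct_mul hP, hPQ, ct_one hP]
  calc P * (Q * B * ct q Q) * ct q P = (P * Q) * B * (ct q Q * ct q P) := by
        simp only [Matrix.mul_assoc]
    _ = B := by rw [hPQ, hct, Matrix.one_mul, Matrix.mul_one]

lemma mul_cvec (P : Matrix n n K) (u : n → K) : P * cvec u = cvec (P.mulVec u) := by
  ext i j
  simp [Matrix.mul_apply, cvec, Matrix.mulVec, dotProduct]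

lemma rvec_mul (hP : Pkg q K) (P : Matrix n n K) (u : n → K) :
    rvec q u * ct q P = rvec q (P.mulVec u) := by
  ext i j
  simp only [Matrix.mul_apply, rvec, ct_apply, Matrix.of_apply, Matrix.mulVec, dotProduct,
    conj_sum hP, mul_pow]
  exact Finset.sum_congr rfl fun k _ => mul_comm _ _

lemma bord_congr (hP : Pkg q K) (P : Matrix n n K) (u : n → K) (A : Matrix n n K) :
    (Matrix.fromBlocks 1 0 0 P) * bord q u A * (Matrix.fromBlocks 1 0 0 (ct q P))
      = bord q (P.mulVec u) (P * A * ct q P) := by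
  rw [bord, bord, Matrix.fromBlocks_multiply, Matrix.fromBlocks_multiply]
  congr 1 <;> simp [mul_cvec, rvec_mul hP, Matrix.mul_assoc]

lemma bord_unit_congr (hP : Pkg q K) {P Q : Matrix n n K} (hPQ : P * Q = 1)
    (hQP : Q * P = 1) (u : n → K) (A : Matrix n n K) :
    IsUnit (bord q (P.mulVec u) (P * A * ct q P)) ↔ IsUnit (bord q u A) := by
  rw [← bord_congr hP]
  have hF : IsUnit (Matrix.fromBlocks 1 0 0 P : Matrix (Unit ⊕ n) (Unit ⊕ n) K) := by
    refine (Matrix.isUnit_iff_isUnit_det _).mpr (Matrix.isUnit_det_of_left_inverse (B := Matrix.fromBlocks 1 0 0 Q) ?_)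
    rw [Matrix.fromBlocks_multiply]
    simp [hQP, Matrix.fromBlocks_one]
  have hG : IsUnit (Matrix.fromBlocks 1 0 0 (ct q P) : Matrix (Unit ⊕ n) (Unit ⊕ n) K) := by
    refine (Matrix.isUnit_iff_isUnit_det _).mpr (Matrix.isUnit_det_of_left_inverse (B := Matrix.fromBlocks 1 0 0 (ct q Q)) ?_)
    rw [Matrix.fromBlocks_multiply]
    have : ct q Q * ct q P = 1 := by rw [← ct_mul hP, hPQ, ct_one hP]
    simp [this, Matrix.fromBlocks_one]
  rw [← hF.unit_spec, ← hG.unit_spec, Units.isUnit_mul_units, Units.isUnit_units_mul]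

lemma exists_unit_mulVec_single (u : n → K) (i : n) (hui : u i ≠ 0) :
    ∃ P : Matrix n n K, IsUnit P ∧ P.mulVec u = Pi.single i 1 := by
  classical
  set w : n → K := fun k => if k = i then (u i)⁻¹ else -(u k) * (u i)⁻¹ with hw
  refine ⟨Matrix.updateCol 1 i w, ?_, ?_⟩
  · rw [Matrix.isUnit_iff_isUnit_det]
    have : (Matrix.updateCol 1 i w).det = Matrix.cramer (1 : Matrix n n K) w i := by
      rw [Matrix.cramer_apply]
    rw [this, Matrix.cramer_one]
    simp only [hw, LinearMap.id_apply, if_pos rfl]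
    simp [isUnit_iff_ne_zero, hui]
  · funext k
    rw [Matrix.mulVec, dotProduct]
    rw [← Finset.add_sum_erase _ _ (Finset.mem_univ i)]
    have h1 : ∀ l ∈ Finset.univ.erase i,
        Matrix.updateCol 1 i w k l * u l = (if l = k then u l else 0) := by
      intro l hl
      rw [Matrix.updateCol_apply, if_neg (Finset.mem_erase.mp hl).1,
        Matrix.one_apply]
      split_ifs with h h' h'
      · rw [one_mul]
      · exact absurd h.symm h'
      · exact absurd h'.symm h
      · rw [zero_mul]
    rw [Finset.sum_congr rfl h1, Finset.sum_ite_eq' (Finset.univ.erase i) k u]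
    rw [Matrix.updateCol_apply, if_pos rfl]
    by_cases hk : k = i
    · subst hk
      simp [hw, Pi.single_apply, inv_mul_cancel₀ hui]
    · have hmem : k ∈ Finset.univ.erase i := Finset.mem_erase.mpr ⟨hk, Finset.mem_univ k⟩
      rw [if_pos hmem, Pi.single_apply, if_neg hk]
      simp only [hw, if_neg hk]
      field_simp
      ring


lemma exists_unit_mulVec_swap (i j : n) :
    ∃ P : Matrix n n K, IsUnit P ∧ P.mulVec (Pi.single i 1) = Pi.single j (1 : K) := by
  classical
  set S : Matrix n n K := Matrix.of fun k l => if l = Equiv.swap i j k then 1 else 0 with hS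
  have hmv : ∀ x : n → K, S.mulVec x = fun k => x (Equiv.swap i j k) := by
    intro x
    funext k
    rw [Matrix.mulVec, dotProduct]
    have : ∀ l, S k l * x l = if l = Equiv.swap i j k then x l else 0 := by
      intro l
      rw [hS, Matrix.of_apply]
      split_ifs <;> simp
    rw [Finset.sum_congr rfl fun l _ => this l, Finset.sum_ite_eq' Finset.univ _ x]
    simp
  have hSS : S * S = 1 := by
    ext k l
    rw [Matrix.mul_apply]
    have : ∀ m, S k m * S m l = if m = Equiv.swap i j k then (if l = Equiv.swap i j m then (1:K) else 0) else 0 := by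
      intro m
      rw [hS, Matrix.of_apply, Matrix.of_apply]
      split_ifs <;> simp
    rw [Finset.sum_congr rfl fun m _ => this m, Finset.sum_ite_eq' Finset.univ _ _]
    simp only [Finset.mem_univ, if_pos, Equiv.swap_apply_self, Matrix.one_apply]
    by_cases h : l = k
    · simp [h]
    · simp only [if_neg h]
      exact (if_neg (fun hh => h hh.symm)).symm
  refine ⟨S, (Matrix.isUnit_iff_isUnit_det _).mpr (Matrix.isUnit_det_of_left_inverse hSS), ?_⟩
  rw [hmv]
  funext k
  rw [Pi.single_apply, Pi.single_apply]
  congr 1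
  simp only [eq_iff_iff]
  constructor
  · intro h
    have := congrArg (Equiv.swap i j) h.symm
    rwa [Equiv.swap_apply_self, Equiv.swap_apply_left, eq_comm] at this
  · rintro rfl
    rw [Equiv.swap_apply_right]

lemma exists_unit_mulVec {u v : n → K} (hu : u ≠ 0) (hv : v ≠ 0) :
    ∃ P : Matrix n n K, IsUnit P ∧ P.mulVec u = v := by
  classical
  have hi : ∃ i, u i ≠ 0 := by
    by_contra h
    push_neg at h
    exact hu (funext h)
  have hj : ∃ j, v j ≠ 0 := by
    by_contra h
    push_neg at h
    exact hv (funext h)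
  obtain ⟨i, hi⟩ := hi
  obtain ⟨j, hj⟩ := hj
  obtain ⟨P₁, hP₁, hP₁v⟩ := exists_unit_mulVec_single u i hi
  obtain ⟨S, hSu, hSv⟩ := exists_unit_mulVec_swap (K := K) i j
  obtain ⟨P₂, hP₂, hP₂v⟩ := exists_unit_mulVec_single v j hj
  have hP₂inv : IsUnit (P₂⁻¹) :=
    (Matrix.isUnit_iff_isUnit_det _).mpr (Matrix.isUnit_det_of_left_inverse (Matrix.mul_nonsing_inv _ ((Matrix.isUnit_iff_isUnit_det _).mp hP₂)))
  refine ⟨P₂⁻¹ * (S * P₁), (hP₂inv.mul (hSu.mul hP₁)), ?_⟩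
  rw [← Matrix.mulVec_mulVec, ← Matrix.mulVec_mulVec, hP₁v, hSv, ← hP₂v,
    Matrix.mulVec_mulVec, Matrix.nonsing_inv_mul _ (Matrix.isUnit_iff_isUnit_det _ |>.mp hP₂),
    Matrix.one_mulVec]


lemma eq_bord_corner (hP : Pkg q K) {H : Matrix (Unit ⊕ n) (Unit ⊕ n) K}
    (hcond : Cond q H) (hcc : H (Sum.inl ()) (Sum.inl ()) = 0) :
    bord q (fun i => H (Sum.inr i) (Sum.inl ())) H.toBlocks₂₂ = H := by
  have h := eq_fromBlocks_corner hP hcond hcc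
  rw [bord]
  exact h

noncomputable def bord_fiber_equiv (hP : Pkg q K) (u v : n → K) {Pm : Matrix n n K}
    (hPm : IsUnit Pm) (hmap : Pm.mulVec u = v) :
    {A : Matrix n n K // Cond q A ∧ IsUnit (bord q u A)}
      ≃ {B : Matrix n n K // Cond q B ∧ IsUnit (bord q v B)} := by
  have hdet := (Matrix.isUnit_iff_isUnit_det _).mp hPm
  have hPQ : Pm * Pm⁻¹ = 1 := Matrix.mul_nonsing_inv _ hdet
  have hQP : Pm⁻¹ * Pm = 1 := Matrix.nonsing_inv_mul _ hdet
  refine ⟨fun A => ⟨Pm * A.1 * ct q Pm, cond_congr hP A.2.1 _, ?_⟩,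
    fun B => ⟨Pm⁻¹ * B.1 * ct q (Pm⁻¹), cond_congr hP B.2.1 _, ?_⟩, ?_, ?_⟩
  · rw [← hmap]
    exact (bord_unit_congr hP hPQ hQP u A.1).mpr A.2.2
  · rw [← bord_unit_congr hP hPQ hQP _ _, sandwich hP hPQ, hmap]
    exact B.2.2
  · rintro ⟨A, hA⟩
    exact Subtype.ext (sandwich hP hQP A)
  · rintro ⟨B, hB⟩
    exact Subtype.ext (sandwich hP hPQ B)

lemma card_corner_zero (hP : Pkg q K) {u₀ : n → K} (hu₀ : u₀ ≠ 0) :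
    Nat.card {H : Matrix (Unit ⊕ n) (Unit ⊕ n) K //
        Cond q H ∧ IsUnit H ∧ H (Sum.inl ()) (Sum.inl ()) = 0}
      = (Fintype.card K ^ Fintype.card n - 1) *
        Nat.card {A : Matrix n n K // Cond q A ∧ IsUnit (bord q u₀ A)} := by
  classical
  have hex : ∀ u : {u : n → K // u ≠ 0},
      ∃ P : Matrix n n K, IsUnit P ∧ P.mulVec u.1 = u₀ := fun u =>
    exists_unit_mulVec u.2 hu₀
  choose P hPu hPv using hex
  have e1 : {H : Matrix (Unit ⊕ n) (Unit ⊕ n) K //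
        Cond q H ∧ IsUnit H ∧ H (Sum.inl ()) (Sum.inl ()) = 0}
      ≃ {p : {u : n → K // u ≠ 0} × Matrix n n K //
          Cond q p.2 ∧ IsUnit (bord q p.1.1 p.2)} := by
    refine ⟨fun H => ⟨(⟨fun i => H.1 (Sum.inr i) (Sum.inl ()), ?_⟩, H.1.toBlocks₂₂), ?_, ?_⟩,
      fun p => ⟨bord q p.1.1.1 p.1.2, (cond_bord hP _ _).mpr p.2.1, ?_, ?_⟩, ?_, ?_⟩
    · -- nonzero column
      obtain ⟨H, hcond, hu, hcc⟩ := H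
      intro h0
      have hcol : ∀ i, H i (Sum.inl ()) = 0 := by
        rintro (i | i)
        · exact hcc
        · exact congrFun h0 i
      have hdet := Matrix.det_eq_zero_of_column_eq_zero (Sum.inl ()) hcol
      rw [Matrix.isUnit_iff_isUnit_det, hdet] at hu
      exact not_isUnit_zero hu
    · exact fun i j => H.2.1 (Sum.inr i) (Sum.inr j)
    · obtain ⟨H, hcond, hu, hcc⟩ := H
      simpa only [eq_bord_corner hP hcond hcc] using hu
    · exact p.2.2
    · simp [bord, Matrix.fromBlocks]
    · rintro ⟨H, hcond, hu, hcc⟩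
      exact Subtype.ext (eq_bord_corner hP hcond hcc)
    · rintro ⟨⟨⟨u, hu⟩, A⟩, hcond, hunit⟩
      apply Subtype.ext
      simp only [Prod.mk.injEq]
      constructor
      · apply Subtype.ext
        funext i
        rfl
      · simp [bord]
  have e2 := Equiv.subtypeProdEquivSigmaSubtype
    (fun (u : {u : n → K // u ≠ 0}) (A : Matrix n n K) =>
      Cond q A ∧ IsUnit (bord q u.1 A))
  have e3 : ∀ u : {u : n → K // u ≠ 0},
      {A : Matrix n n K // Cond q A ∧ IsUnit (bord q u.1 A)}
        ≃ {A : Matrix n n K // Cond q A ∧ IsUnit (bord q u₀ A)} := fun u =>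
    bord_fiber_equiv hP u.1 u₀ (hPu u) (hPv u)
  have e4 := Equiv.sigmaCongrRight e3
  have e5 := Equiv.sigmaEquivProd {u : n → K // u ≠ 0}
    {A : Matrix n n K // Cond q A ∧ IsUnit (bord q u₀ A)}
  rw [Nat.card_congr (((e1.trans e2).trans e4).trans e5), Nat.card_prod]
  congr 1
  rw [Nat.card_eq_fintype_card, Fintype.card_subtype_compl, Fintype.card_fun,
    Fintype.card_subtype_eq (0 : n → K)]


section B2
variable {m : Type*} [Fintype m] [DecidableEq m]

/-- invertibility of the matrix bordered by the first standard basis vector -/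
lemma isUnit_bord_e0_iff (hP : Pkg q K) (A : Matrix (Unit ⊕ m) (Unit ⊕ m) K) :
    IsUnit (bord q (Sum.elim (fun _ => (1:K)) 0) A) ↔ IsUnit A.toBlocks₂₂ := by
  classical
  set u₀ : (Unit ⊕ m) → K := Sum.elim (fun _ => (1:K)) 0 with hu₀
  set a : K := A (Sum.inl ()) (Sum.inl ()) with ha
  set T : Matrix (Unit ⊕ Unit) (Unit ⊕ Unit) K :=
    Matrix.fromBlocks 0 1 1 (Matrix.of fun _ _ => a) with hT
  set Tinv : Matrix (Unit ⊕ Unit) (Unit ⊕ Unit) K :=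
    Matrix.fromBlocks (Matrix.of fun _ _ => -a) 1 1 0 with hTinv
  set B' : Matrix (Unit ⊕ Unit) m K :=
    Matrix.of fun i j => Sum.elim (fun _ => (0:K)) (fun _ => A (Sum.inl ()) (Sum.inr j)) i with hB'
  set C' : Matrix m (Unit ⊕ Unit) K :=
    Matrix.of fun i j => Sum.elim (fun _ => (0:K)) (fun _ => A (Sum.inr i) (Sum.inl ())) j with hC'
  have hTi1 : Tinv * T = 1 := by
    ext i j
    rcases i with i | i <;> rcases j with j | j <;>
      simp [hT, hTinv, Matrix.mul_apply, Fintype.sum_sum_type, Matrix.fromBlocks,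
        Matrix.one_apply]
  have hTi2 : T * Tinv = 1 := by
    ext i j
    rcases i with i | i <;> rcases j with j | j <;>
      simp [hT, hTinv, Matrix.mul_apply, Fintype.sum_sum_type, Matrix.fromBlocks,
        Matrix.one_apply]
  haveI hTinst : Invertible T := ⟨Tinv, hTi1, hTi2⟩
  have hsub : (bord q u₀ A).submatrix (Equiv.sumAssoc Unit Unit m) (Equiv.sumAssoc Unit Unit m)
      = Matrix.fromBlocks T B' C' A.toBlocks₂₂ := by
    ext i j
    rcases i with (⟨⟩ | i) | i <;> rcases j with (⟨⟩ | j) | j <;>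
      simp [bord, hT, hB', hC', hu₀, ha, Matrix.fromBlocks, Matrix.submatrix, Equiv.sumAssoc,
        rvec, cvec, Matrix.toBlocks₂₂, one_pow, conj_zero hP]
  have hzero : C' * ⅟T * B' = 0 := by
    have hiT : (⅟T : Matrix (Unit ⊕ Unit) (Unit ⊕ Unit) K) = Tinv := invOf_eq_right_inv hTi2
    rw [hiT]
    ext i j
    simp [hC', hB', hTinv, Matrix.mul_apply, Fintype.sum_sum_type, Matrix.fromBlocks]
  have hdet : (bord q u₀ A).det = T.det * A.toBlocks₂₂.det := by
    rw [← Matrix.det_submatrix_equiv_self (Equiv.sumAssoc Unit Unit m), hsub,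
      Matrix.det_fromBlocks₁₁, hzero, sub_zero]
  rw [Matrix.isUnit_iff_isUnit_det, Matrix.isUnit_iff_isUnit_det, hdet,
    isUnit_iff_ne_zero, isUnit_iff_ne_zero, mul_ne_zero_iff]
  have hTdet : T.det ≠ 0 := by
    rw [← isUnit_iff_ne_zero]
    exact Matrix.isUnit_det_of_invertible T
  tauto

lemma card_bord_e0 (hP : Pkg q K) :
    Nat.card {A : Matrix (Unit ⊕ m) (Unit ⊕ m) K //
        Cond q A ∧ IsUnit (bord q (Sum.elim (fun _ => (1:K)) 0) A)}
      = q * (Fintype.card K ^ Fintype.card m * NN q K m) := by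
  classical
  have he : {A : Matrix (Unit ⊕ m) (Unit ⊕ m) K //
        Cond q A ∧ IsUnit (bord q (Sum.elim (fun _ => (1:K)) 0) A)}
      ≃ {x : K // x ^ q = x} × ((m → K) ×
          {C : Matrix m m K // Cond q C ∧ IsUnit C}) := by
    refine ⟨fun A => ⟨⟨A.1 (Sum.inl ()) (Sum.inl ()), (A.2.1 (Sum.inl ()) (Sum.inl ())).symm⟩,
        fun j => A.1 (Sum.inr j) (Sum.inl ()),
        ⟨A.1.toBlocks₂₂, fun i j => A.2.1 (Sum.inr i) (Sum.inr j),
          (isUnit_bord_e0_iff hP A.1).mp A.2.2⟩⟩,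
      fun p => ⟨Matrix.fromBlocks (Matrix.of fun _ _ => p.1.1) (rvec q p.2.1) (cvec p.2.1)
          p.2.2.1, ?_, ?_⟩, ?_, ?_⟩
    · exact (cond_fromBlocks hP p.1.1 p.1.2 _ _).mpr p.2.2.2.1
    · rw [isUnit_bord_e0_iff hP]
      simpa using p.2.2.2.2
    · rintro ⟨A, hcond, hunit⟩
      exact Subtype.ext (eq_fromBlocks_corner hP hcond rfl)
    · rintro ⟨⟨x, hx⟩, b, ⟨C, hC⟩⟩
      simp only [Prod.mk.injEq]
      refine ⟨Subtype.ext rfl, rfl, Subtype.ext ?_⟩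
      simp
  rw [Nat.card_congr he, Nat.card_prod, Nat.card_prod, Nat.card_eq_fintype_card,
    Nat.card_eq_fintype_card (α := m → K), Fintype.card_subtype, hP.hfix, Fintype.card_fun, NN]


end B2

section Rec
variable {m : Type*} [Fintype m] [DecidableEq m]

lemma NN_rec (hP : Pkg q K) :
    NN q K (Unit ⊕ (Unit ⊕ m)) =
      (q - 1) * (Fintype.card K ^ (Fintype.card m + 1) * NN q K (Unit ⊕ m))
      + (Fintype.card K ^ (Fintype.card m + 1) - 1) *
          (q * (Fintype.card K ^ Fintype.card m * NN q K m)) := by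
  classical
  set w := Unit ⊕ m with hw
  have hcw : Fintype.card w = Fintype.card m + 1 := by
    simp [hw, add_comm]
  -- fibers over the corner entry
  set fib : K → Type _ := fun c => {H : Matrix (Unit ⊕ w) (Unit ⊕ w) K //
      Cond q H ∧ IsUnit H ∧ H (Sum.inl ()) (Sum.inl ()) = c} with hfib
  have hsig : {H : Matrix (Unit ⊕ w) (Unit ⊕ w) K // Cond q H ∧ IsUnit H}
      ≃ Σ c : K, fib c := by
    refine ⟨fun H => ⟨H.1 (Sum.inl ()) (Sum.inl ()), H.1, H.2.1, H.2.2, rfl⟩,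
      fun p => ⟨p.2.1, p.2.2.1, p.2.2.2.1⟩, fun H => rfl, ?_⟩
    rintro ⟨c, H, h1, h2, h3⟩
    subst h3
    rfl
  haveI : ∀ c : K, Fintype (fib c) := fun c => Fintype.ofFinite _
  have hsum : NN q K (Unit ⊕ w) = ∑ c : K, Nat.card (fib c) := by
    rw [NN, Nat.card_congr hsig, Nat.card_eq_fintype_card, Fintype.card_sigma]
    exact Finset.sum_congr rfl fun c _ => (Nat.card_eq_fintype_card).symm
  -- fibers over non-fixed points are empty
  have hempty : ∀ c : K, ¬(c ^ q = c) → Nat.card (fib c) = 0 := by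
    intro c hc
    have : IsEmpty (fib c) := by
      refine ⟨fun H => hc ?_⟩
      obtain ⟨H, h1, h2, h3⟩ := H
      rw [← h3]
      exact (h1 (Sum.inl ()) (Sum.inl ())).symm
    exact Nat.card_of_isEmpty
  have hu₀ : (Sum.elim (fun _ => (1:K)) 0 : w → K) ≠ 0 := by
    intro h
    have := congrFun h (Sum.inl ())
    simp at this
  have hzero : Nat.card (fib 0) =
      (Fintype.card K ^ Fintype.card w - 1) *
        (q * (Fintype.card K ^ Fintype.card m * NN q K m)) := by
    rw [hfib]
    rw [card_corner_zero hP hu₀, card_bord_e0 hP]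
  have hne : ∀ c : K, c ^ q = c → c ≠ 0 → Nat.card (fib c) =
      Fintype.card K ^ Fintype.card w * NN q K w := by
    intro c h1 h2
    rw [hfib, card_corner_ne_zero hP c h1 h2]
  -- assemble the sum
  have hsplit : ∑ c : K, Nat.card (fib c)
      = ∑ c ∈ Finset.univ.filter (fun x : K => x ^ q = x), Nat.card (fib c) := by
    rw [← Finset.sum_filter_add_sum_filter_not Finset.univ (fun x : K => x ^ q = x)]
    have : ∑ c ∈ Finset.univ.filter (fun x : K => ¬x ^ q = x), Nat.card (fib c) = 0 :=
      Finset.sum_eq_zero fun c hc => hempty c (Finset.mem_filter.mp hc).2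
    rw [this, add_zero]
  have h0mem : (0 : K) ∈ Finset.univ.filter (fun x : K => x ^ q = x) := by
    simp [conj_zero hP]
  rw [hsum, hsplit, ← Finset.add_sum_erase _ _ h0mem, hzero]
  have hconst : ∑ c ∈ (Finset.univ.filter (fun x : K => x ^ q = x)).erase 0,
      Nat.card (fib c) = (q - 1) * (Fintype.card K ^ Fintype.card w * NN q K w) := by
    rw [Finset.sum_congr rfl (fun c hc => ?_), Finset.sum_const, smul_eq_mul,
      Finset.card_erase_of_mem h0mem, hP.hfix]
    obtain ⟨hc0, hcfix⟩ := Finset.mem_erase.mp hc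
    exact hne c (Finset.mem_filter.mp hcfix).2 hc0
  rw [hconst, hcw, add_comm]

end Rec


end Blocks

/-- `Fin (m+1) ≃ Unit ⊕ Fin m` -/
def finE (m : ℕ) : Fin (m + 1) ≃ Unit ⊕ Fin m :=
  (finSuccEquiv m).trans ((Equiv.optionEquivSumPUnit (Fin m)).trans (Equiv.sumComm _ _))

lemma NN_fin_zero : NN q K (Fin 0) = 1 := NN_empty _

lemma NN_fin_one (hP : Pkg q K) : NN q K (Fin 1) = q - 1 := by
  rw [NN_reindex (q := q) (K := K) (Equiv.equivPUnit (Fin 1)), NN_unit hP]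

lemma NN_fin_rec (hP : Pkg q K) (m : ℕ) :
    NN q K (Fin (m + 2)) =
      (q - 1) * ((q ^ 2) ^ (m + 1) * NN q K (Fin (m + 1)))
      + ((q ^ 2) ^ (m + 1) - 1) * (q * ((q ^ 2) ^ m * NN q K (Fin m))) := by
  have e : Fin (m + 2) ≃ Unit ⊕ (Unit ⊕ Fin m) :=
    (finE (m + 1)).trans (Equiv.sumCongr (Equiv.refl Unit) (finE m))
  rw [NN_reindex (q := q) (K := K) e, NN_rec hP,
    NN_reindex (q := q) (K := K) (finE m).symm, hP.hcard]
  simp only [Fintype.card_fin]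

lemma NN_fin_formula (hP : Pkg q K) (ℓ : ℕ) :
    (NN q K (Fin ℓ) : ℤ) =
      (q : ℤ) ^ (ℓ.choose 2) * ∏ i ∈ Finset.Icc 1 ℓ, ((q : ℤ) ^ i + (-1) ^ i) := by
  induction ℓ using Nat.strong_induction_on with
  | _ ℓ ih =>
    match ℓ with
    | 0 => simp [NN_fin_zero]
    | 1 =>
      rw [NN_fin_one hP, Nat.cast_sub (by have := hP.hq2; omega)]
      simp
      ring
    | (m + 2) =>
      have hq1 : 1 ≤ q := by have := hP.hq2; omega
      have hrec := NN_fin_rec hP m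
      have ih1 := ih (m + 1) (by omega)
      have ih0 := ih m (by omega)
      have hcast : (NN q K (Fin (m + 2)) : ℤ) =
          ((q : ℤ) - 1) * (((q : ℤ) ^ 2) ^ (m + 1) * (NN q K (Fin (m + 1)) : ℤ))
          + (((q : ℤ) ^ 2) ^ (m + 1) - 1) * ((q : ℤ) * (((q : ℤ) ^ 2) ^ m * (NN q K (Fin m) : ℤ))) := by
        have hX1 : 1 ≤ (q ^ 2) ^ (m + 1) := Nat.one_le_pow _ _ (pow_pos (by omega) 2)
        rw [hrec]
        push_cast [Nat.cast_sub hq1, Nat.cast_sub hX1]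
        ring
      rw [hcast, ih1, ih0]
      -- combinatorial identities for the exponents and products
      have hc1 : (m + 1).choose 2 = m.choose 2 + m := by
        rw [Nat.choose_succ_succ, Nat.choose_one_right, Nat.add_comm]
      have hc2 : (m + 2).choose 2 = m.choose 2 + (2 * m + 1) := by
        rw [Nat.choose_succ_succ, Nat.choose_one_right, hc1]
        omega
      have hp1 : ∏ i ∈ Finset.Icc 1 (m + 1), ((q : ℤ) ^ i + (-1) ^ i)
          = (∏ i ∈ Finset.Icc 1 m, ((q : ℤ) ^ i + (-1) ^ i)) * ((q:ℤ) ^ (m+1) + (-1) ^ (m+1)) := by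
        rw [← Finset.prod_Icc_succ_top (by omega : 1 ≤ m + 1)]
      have hp2 : ∏ i ∈ Finset.Icc 1 (m + 2), ((q : ℤ) ^ i + (-1) ^ i)
          = (∏ i ∈ Finset.Icc 1 (m+1), ((q : ℤ) ^ i + (-1) ^ i)) * ((q:ℤ) ^ (m+2) + (-1) ^ (m+2)) := by
        rw [← Finset.prod_Icc_succ_top (by omega : 1 ≤ m + 2)]
      rw [hp2, hp1, hc2, hc1]
      set Q : ℤ := (q : ℤ)
      set P : ℤ := ∏ i ∈ Finset.Icc 1 m, (Q ^ i + (-1) ^ i)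
      set s : ℤ := (-1) ^ m with hsdef
      have hs : s * s = 1 := by
        rw [hsdef, ← pow_add]
        exact Even.neg_one_pow ⟨m, rfl⟩
      have e1 : ((-1 : ℤ)) ^ (m + 1) = -s := by rw [pow_succ, hsdef]; ring
      have e2 : ((-1 : ℤ)) ^ (m + 2) = s := by rw [pow_succ, pow_succ, hsdef]; ring
      rw [e1, e2]
      have e3 : Q ^ (m.choose 2 + (2 * m + 1)) = Q ^ (m.choose 2) * Q ^ m * Q ^ m * Q := by
        rw [show m.choose 2 + (2 * m + 1) = ((m.choose 2 + m) + m) + 1 by omega,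
          pow_succ, pow_add, pow_add]
      have e4 : Q ^ (m.choose 2 + m) = Q ^ (m.choose 2) * Q ^ m := pow_add Q _ _
      have e5 : (Q ^ 2) ^ (m + 1) = Q ^ m * Q ^ m * Q * Q := by
        rw [← pow_mul]
        rw [show 2 * (m + 1) = m + m + 1 + 1 by ring]
        rw [pow_succ, pow_succ, pow_add]
      have e6 : (Q ^ 2) ^ m = Q ^ m * Q ^ m := by
        rw [← pow_mul, show 2 * m = m + m by ring, pow_add]
      have e7 : Q ^ (m + 1) = Q ^ m * Q := pow_succ Q m
      have e8 : Q ^ (m + 2) = Q ^ m * Q * Q := by rw [pow_succ, pow_succ]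
      rw [e3, e4, e5, e6, e7, e8]
      linear_combination (Q ^ (m.choose 2) * P * Q * (Q ^ m) * (Q ^ m)) * hs

end HermCount

/-- The number of invertible ℓ×ℓ Hermitian matrices over F_{q²} is
    q^{C(ℓ,2)} ∏_{i=1}^{ℓ} (q^i + (-1)^i). -/
theorem stmt5 (q ℓ : ℕ) (hq : ∃ p n : ℕ, p.Prime ∧ 0 < n ∧ q = p ^ n) (hℓ : 1 ≤ ℓ)
    (K : Type*) [Field K] [Fintype K] (hK : Fintype.card K = q ^ 2) :
    ({H : Matrix (Fin ℓ) (Fin ℓ) K | (∀ i j, H j i = (H i j) ^ q) ∧ IsUnit H}.ncard : ℤ)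
      = (q : ℤ) ^ (ℓ.choose 2) * ∏ i ∈ Finset.Icc 1 ℓ, ((q : ℤ) ^ i + (-1) ^ i) := by
  classical
  have hP : HermCount.Pkg q K := HermCount.pkg_of hq hK
  have h1 : {H : Matrix (Fin ℓ) (Fin ℓ) K |
      (∀ i j, H j i = (H i j) ^ q) ∧ IsUnit H}.ncard = HermCount.NN q K (Fin ℓ) := by
    rw [← Nat.card_coe_set_eq]
    rfl
  rw [h1]
  exact HermCount.NN_fin_formula hP ℓ
end

section
/- Let q be a prime power and ℓ = 2. Consider f(X₁,X₂,X₃) = f₀ + f₁X₁ + f₂X₂ + f₂^qX₂^q + f₃X₃ + (X₁X₃ − X₂^{q+1}) evaluated over 2×2 Hermitian matrices (X₁,X₃ ∈ F_q, X₂ ∈ F_{q^2}), with f₀,f₁,f₃ ∈ F_q and f₂ ∈ F_{q^2}. Then the number of Hermitian matrices on which f is nonzero is at least q⁴ − q³ − q. -/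
open Polynomial

/-- For f = f₀ + f₁X₁ + f₂X₂ + f₂^qX₂^q + f₃X₃ + (X₁X₃ - X₂^{q+1}),
    the number of 2×2 Hermitian matrices with f ≠ 0 is at least q⁴ - q³ - q. -/
theorem stmt9 (q : ℕ) (hq : ∃ p n : ℕ, p.Prime ∧ 0 < n ∧ q = p ^ n)
    (K : Type*) [Field K] [Fintype K] (hK : Fintype.card K = q ^ 2)
    (f0 f1 f3 : K) (h0 : f0 ^ q = f0) (h1 : f1 ^ q = f1) (h3 : f3 ^ q = f3)
    (f2 : K) :
    q ^ 4 - q ^ 3 - q ≤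
      {x : K × K × K | x.1 ^ q = x.1 ∧ x.2.2 ^ q = x.2.2 ∧
        f0 + f1 * x.1 + f2 * x.2.1 + f2 ^ q * x.2.1 ^ q + f3 * x.2.2
          + (x.1 * x.2.2 - x.2.1 ^ (q + 1)) ≠ 0}.ncard := by
  classical
  obtain ⟨p, n, hp, hn, hqe⟩ := hq
  haveI : Fact p.Prime := ⟨hp⟩
  have hq2 : 2 ≤ q := by
    rw [hqe]; exact Nat.one_lt_pow hn.ne' hp.one_lt
  have hpq : p ∣ q := hqe ▸ dvd_pow_self p hn.ne'
  -- characteristic of K is p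
  haveI hcharP : CharP K p := by
    have hcast : ((p : K)) ^ (2 * n) = 0 := by
      have := FiniteField.cast_card_eq_zero K
      rw [hK, hqe] at this
      push_cast at this
      rw [← pow_mul, mul_comm n 2] at this
      exact_mod_cast this
    have hp0 : (p : K) = 0 := pow_eq_zero_iff (by omega) |>.mp hcast
    have hdvd : ringChar K ∣ p := (ringChar.spec K p).mp hp0
    have hrc : ringChar K = p := by
      rcases (Nat.Prime.eq_one_or_self_of_dvd hp _ hdvd) with h | h
      · exact absurd h (CharP.ringChar_ne_one)
      · exact h
    exact hrc ▸ ringChar.charP K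
  -- the subfield of elements fixed by x ↦ x^q has exactly q elements
  set F : Finset K := Finset.univ.filter (fun x => x ^ q = x) with hF
  have hFmem : ∀ x : K, x ∈ F ↔ x ^ q = x := by
    intro x; simp [hF]
  have hFcard : F.card = q := by
    set r : K[X] := X ^ q - X with hr
    have hrne : r ≠ 0 := FiniteField.X_pow_card_sub_X_ne_zero K hq2
    have hrdeg : r.natDegree = q := FiniteField.X_pow_card_sub_X_natDegree_eq K hq2
    have hrsep : r.Separable := galois_poly_separable p q hpq
    have hdvd : r ∣ (X ^ q ^ 2 - X : K[X]) := by
      refine ⟨r ^ (q - 1) + 1, ?_⟩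
      have h1 : r ^ q = X ^ q ^ 2 - X ^ q := by
        rw [hr, hqe, sub_pow_char_pow, ← pow_mul, ← pow_two, ← pow_mul, ← hqe]
      have h2 : r * (r ^ (q - 1) + 1) = r ^ q + r := by
        rw [mul_add, mul_one, ← pow_succ', Nat.sub_add_cancel (by omega)]
      rw [h2, h1, hr]; ring
    have hbigne : (X ^ q ^ 2 - X : K[X]) ≠ 0 := by
      have := FiniteField.X_pow_card_sub_X_ne_zero K (p := q ^ 2) (by nlinarith)
      exact this
    have hbigsplits : Splits (X ^ q ^ 2 - X : K[X]) := by
      rw [splits_iff_card_roots, ← hK, FiniteField.roots_X_pow_card_sub_X K,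
        FiniteField.X_pow_card_sub_X_natDegree_eq K Fintype.one_lt_card]
      exact Finset.card_univ
    have hrsplits : Splits r :=
      hbigsplits.of_dvd hbigne hdvd
    have hcard : Multiset.card r.roots = q := by
      rw [← hrdeg]; exact splits_iff_card_roots.mp hrsplits
    have hnodup : r.roots.Nodup := nodup_roots hrsep
    have hFeq : F = r.roots.toFinset := by
      ext x
      rw [hFmem, Multiset.mem_toFinset, mem_roots hrne]
      simp [hr, IsRoot, sub_eq_zero]
    rw [hFeq, Multiset.toFinset_card_of_nodup hnodup, hcard]
  -- membership facts
  have hf3F : -f3 ∈ F := by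
    rw [hFmem]
    have : (-f3) ^ q = (iterateFrobenius K p n) (-f3) := by
      rw [iterateFrobenius_def, hqe]
    rw [this, map_neg, iterateFrobenius_def, ← hqe, h3]
  -- the sets
  set P : K × K × K → Prop := fun x =>
    f0 + f1 * x.1 + f2 * x.2.1 + f2 ^ q * x.2.1 ^ q + f3 * x.2.2
      + (x.1 * x.2.2 - x.2.1 ^ (q + 1)) = 0 with hP
  set H : Finset (K × K × K) := F ×ˢ Finset.univ ×ˢ F with hH
  have hHmem : ∀ x : K × K × K, x ∈ H ↔ x.1 ^ q = x.1 ∧ x.2.2 ^ q = x.2.2 := by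
    intro x; simp [hH, Finset.mem_product, hFmem]
  set T : Finset (K × K × K) := H.filter (fun x => ¬ P x) with hT
  have hset : {x : K × K × K | x.1 ^ q = x.1 ∧ x.2.2 ^ q = x.2.2 ∧
      f0 + f1 * x.1 + f2 * x.2.1 + f2 ^ q * x.2.1 ^ q + f3 * x.2.2
        + (x.1 * x.2.2 - x.2.1 ^ (q + 1)) ≠ 0} = (↑T : Set (K × K × K)) := by
    ext x
    simp only [Set.mem_setOf_eq, Finset.mem_coe, hT, Finset.mem_filter, hHmem, hP]
    tauto
  rw [hset, Set.ncard_coe_finset]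
  -- cardinality of H
  have hHcard : H.card = q ^ 4 := by
    rw [hH, Finset.card_product, Finset.card_product, Finset.card_univ, hK, hFcard]
    ring
  set Z : Finset (K × K × K) := H.filter P with hZ
  have hsplit : Z.card + T.card = H.card := Finset.card_filter_add_card_filter_not _
  -- bound the zeros with x.1 ≠ -f3
  set Z1 : Finset (K × K × K) := Z.filter (fun x => ¬ x.1 = -f3) with hZ1
  set Z2 : Finset (K × K × K) := Z.filter (fun x => x.1 = -f3) with hZ2
  have hZsplit : Z2.card + Z1.card = Z.card := Finset.card_filter_add_card_filter_not _
  have hZ1card : Z1.card ≤ (q - 1) * q ^ 2 := by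
    have hle : Z1.card ≤ ((F.erase (-f3)) ×ˢ (Finset.univ : Finset K)).card := by
      apply Finset.card_le_card_of_injOn (fun x => (x.1, x.2.1))
      · intro x hx
        rw [Finset.mem_coe, hZ1, Finset.mem_filter, hZ, Finset.mem_filter, hHmem] at hx
        rw [Finset.mem_coe, Finset.mem_product, Finset.mem_erase, hFmem]
        exact ⟨⟨hx.2, hx.1.1.1⟩, Finset.mem_univ _⟩
      · intro x hx y hy hxy
        simp only [Finset.mem_coe, hZ1, Finset.mem_filter, hZ, hP] at hx hy
        obtain ⟨e1, e2⟩ : x.1 = y.1 ∧ x.2.1 = y.2.1 := Prod.mk.inj hxy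
        have hne : f3 + x.1 ≠ 0 := by
          intro h
          exact hx.2 (by linear_combination h)
        have hPx := hx.1.2
        have hPy := hy.1.2
        rw [← e1, ← e2] at hPy
        have h3eq : x.2.2 = y.2.2 := by
          have hprod : (f3 + x.1) * (x.2.2 - y.2.2) = 0 := by
            linear_combination hPx - hPy
          rcases mul_eq_zero.mp hprod with h | h
          · exact absurd h hne
          · exact sub_eq_zero.mp h
        exact Prod.ext e1 (Prod.ext e2 h3eq)
    calc Z1.card ≤ _ := hle
      _ = (q - 1) * q ^ 2 := by
        rw [Finset.card_product, Finset.card_erase_of_mem hf3F, hFcard, Finset.card_univ, hK]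
  -- bound the zeros with x.1 = -f3
  have hZ2card : Z2.card ≤ (q + 1) * q := by
    set g : K[X] := C (f0 - f1 * f3) + C f2 * X + C (f2 ^ q) * X ^ q - X ^ (q + 1) with hg
    have hgcoeff : g.coeff (q + 1) = -1 := by
      rw [hg]
      simp only [coeff_sub, coeff_add, coeff_C_mul, coeff_C, coeff_X, coeff_X_pow]
      norm_num [(by omega : ¬ q + 1 = 0), (by omega : ¬ (1 : ℕ) = q + 1),
        (by omega : ¬ q + 1 = 1), (by omega : ¬ q = q + 1)]
      exact fun h => absurd h (by omega)
    have hgne : g ≠ 0 := fun h => by simp [h] at hgcoeff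
    have hgdeg : g.natDegree ≤ q + 1 := by
      rw [hg]; compute_degree
    have hRcard : g.roots.toFinset.card ≤ q + 1 :=
      le_trans (Multiset.toFinset_card_le _) (le_trans (card_roots' g) hgdeg)
    have hle : Z2.card ≤ (g.roots.toFinset ×ˢ F).card := by
      apply Finset.card_le_card_of_injOn (fun x => (x.2.1, x.2.2))
      · intro x hx
        rw [Finset.mem_coe, hZ2, Finset.mem_filter, hZ, Finset.mem_filter, hHmem] at hx
        rw [Finset.mem_coe, Finset.mem_product, Multiset.mem_toFinset, mem_roots hgne, hFmem]
        refine ⟨?_, hx.1.1.2⟩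
        have hPx := hx.1.2
        rw [hP] at hPx
        rw [hx.2] at hPx
        rw [IsRoot, hg]
        simp only [eval_add, eval_sub, eval_mul, eval_pow, eval_C, eval_X]
        linear_combination hPx
      · intro x hx y hy hxy
        simp only [Finset.mem_coe, hZ2, Finset.mem_filter] at hx hy
        obtain ⟨e2, e3⟩ : x.2.1 = y.2.1 ∧ x.2.2 = y.2.2 := Prod.mk.inj hxy
        exact Prod.ext (hx.2.trans hy.2.symm) (Prod.ext e2 e3)
    calc Z2.card ≤ _ := hle
      _ ≤ (q + 1) * q := by
        rw [Finset.card_product, hFcard]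
        exact Nat.mul_le_mul_right q hRcard
  -- put everything together
  have hZcard : Z.card ≤ q ^ 3 + q := by
    have : (q - 1) * q ^ 2 + (q + 1) * q = q ^ 3 + q := by
      obtain ⟨m, rfl⟩ : ∃ m, q = m + 1 := ⟨q - 1, by omega⟩
      simp only [Nat.add_sub_cancel]
      ring
    omega
  have hTcard : T.card = q ^ 4 - Z.card := by omega
  rw [hTcard]
  have : q ^ 4 - q ^ 3 - q = q ^ 4 - (q ^ 3 + q) := by omega
  rw [this]
  exact Nat.sub_le_sub_left hZcard _
end

section
/- Let q be a prime power, ℓ = 2, and f(X₁,X₂,X₃) = f₀ + f₁X₁ + f₂X₂ + f₂^qX₂^q + f₃X₃ + (X₁X₃ − X₂^{q+1}) with f₀,f₁,f₃ ∈ F_q, f₂ ∈ F_{q^2}. If f₀ + f₂^{q+1} − f₁f₃ = 0, then the number of 2×2 Hermitian matrices (X₁,X₃ ∈ F_q, X₂ ∈ F_{q^2}) on which f is nonzero equals exactly q⁴ − q³ + q² − q. -/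
open Polynomial Finset in
private lemma stmt10_cardF (q p n : ℕ) (hp : p.Prime) (hn : 0 < n) (hq : q = p ^ n)
    (K : Type*) [Field K] [Fintype K] [DecidableEq K] (hK : Fintype.card K = q ^ 2)
    [CharP K p] : (univ.filter fun x : K => x ^ q = x).card = q := by
  have hq1 : 1 < q := hq ▸ Nat.one_lt_pow hn.ne' hp.one_lt
  haveI : Fact p.Prime := ⟨hp⟩
  set h : K[X] := X ^ q - X with hh
  set f : K[X] := X ^ (q ^ 2) - X with hf
  have hfne : f ≠ 0 := FiniteField.X_pow_card_sub_X_ne_zero K (Nat.one_lt_pow two_ne_zero hq1)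
  have hroots : f.roots = Finset.univ.val := by
    rw [hf, ← hK]; exact FiniteField.roots_X_pow_card_sub_X K
  have hfdeg : f.natDegree = q ^ 2 :=
    FiniteField.X_pow_card_sub_X_natDegree_eq K (Nat.one_lt_pow two_ne_zero hq1)
  have hfsplits : f.Splits := by
    rw [splits_iff_card_roots, hroots, hfdeg]
    simpa using hK
  have hdvd : h ∣ f := by
    refine ⟨h ^ (q - 1) + 1, ?_⟩
    have h1 : h * h ^ (q - 1) = h ^ q := by
      rw [← pow_succ']
      congr 1
      omega
    have h2 : h ^ q = X ^ (q ^ 2) - X ^ q := by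
      rw [hh, hq, sub_pow_char_pow, ← pow_mul, ← sq]
    rw [mul_add, mul_one, h1, h2, hh, hf]
    ring
  have hsplits : h.Splits := Splits.of_dvd hfsplits hfne hdvd
  have hqK : (q : K) = 0 := by
    rw [hq, Nat.cast_pow, CharP.cast_eq_zero K p, zero_pow hn.ne']
  have hsep : h.Separable := by
    have : h.derivative = -1 := by
      rw [hh]
      simp [derivative_X_pow, hqK]
    rw [Separable, this]
    exact (isCoprime_one_right).neg_right
  have hcardroots : h.roots.card = q := by
    have := hsplits.natDegree_eq_card_roots
    rw [← this, hh, FiniteField.X_pow_card_sub_X_natDegree_eq K hq1]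
  have hset : univ.filter (fun x : K => x ^ q = x) = h.roots.toFinset := by
    ext x
    simp only [mem_filter, mem_univ, true_and, Multiset.mem_toFinset, mem_roots,
      FiniteField.X_pow_card_sub_X_ne_zero K hq1, hh, ne_eq, not_false_eq_true, IsRoot.def,
      eval_sub, eval_pow, eval_X, sub_eq_zero]
  rw [hset, Multiset.toFinset_card_of_nodup (nodup_roots hsep), hcardroots]

open Finset in
private lemma stmt10_pairs_ne (q : ℕ) (hq1 : 1 < q) (K : Type*) [Field K] [Fintype K]
    [DecidableEq K]
    (hF : (univ.filter fun x : K => x ^ q = x).card = q) (c : K) (hc : c ^ q = c) (hc0 : c ≠ 0) :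
    (univ.filter fun y : K × K => y.1 ^ q = y.1 ∧ y.2 ^ q = y.2 ∧ y.1 * y.2 = c).card = q - 1 := by
  have htc : (univ.filter fun x : K => x ^ q = x ∧ x ≠ 0).card = q - 1 := by
    have he : (univ.filter fun x : K => x ^ q = x ∧ x ≠ 0)
        = (univ.filter fun x : K => x ^ q = x).erase 0 := by
      ext x
      simp only [mem_filter, mem_univ, true_and, mem_erase]
      tauto
    rw [he, card_erase_of_mem, hF]
    simp [zero_pow (by omega : q ≠ 0)]
  rw [← htc]
  apply card_nbij' (fun y : K × K => y.1) (fun x : K => (x, c * x⁻¹))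
  · rintro ⟨a, b⟩ hab
    simp only [mem_coe, mem_filter, mem_univ, true_and] at hab ⊢
    refine ⟨hab.1, fun h => hc0 ?_⟩
    rw [← hab.2.2, h, zero_mul]
  · intro x hx
    simp only [mem_coe, mem_filter, mem_univ, true_and] at hx ⊢
    refine ⟨hx.1, ?_, by field_simp [hx.2]⟩
    rw [mul_pow, inv_pow, hx.1, hc]
  · rintro ⟨a, b⟩ hab
    simp only [mem_coe, mem_filter, mem_univ, true_and] at hab
    have ha : a ≠ 0 := fun h => hc0 (by rw [← hab.2.2, h, zero_mul])
    simp only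
    rw [← hab.2.2]
    field_simp
  · intro x hx
    rfl

open Finset in
private lemma stmt10_pairs_zero (q : ℕ) (hq1 : 1 < q) (K : Type*) [Field K] [Fintype K]
    [DecidableEq K] (hF : (univ.filter fun x : K => x ^ q = x).card = q) :
    (univ.filter fun y : K × K => y.1 ^ q = y.1 ∧ y.2 ^ q = y.2 ∧ y.1 * y.2 = 0).card
      = 2 * q - 1 := by
  have h0 : (0 : K) ^ q = 0 := zero_pow (by omega)
  set F := univ.filter fun x : K => x ^ q = x with hFdef
  have hs : (univ.filter fun y : K × K => y.1 ^ q = y.1 ∧ y.2 ^ q = y.2 ∧ y.1 * y.2 = 0)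
      = ({0} ×ˢ F) ∪ (F ×ˢ {0}) := by
    ext ⟨a, b⟩
    simp only [mem_filter, mem_union, mem_product, mem_singleton, mem_univ, true_and,
      hFdef, mul_eq_zero]
    constructor
    · rintro ⟨ha, hb, h | h⟩
      · exact Or.inl ⟨h, hb⟩
      · exact Or.inr ⟨ha, h⟩
    · rintro (⟨ha, hb⟩ | ⟨ha, hb⟩)
      · exact ⟨ha ▸ h0, hb, Or.inl ha⟩
      · exact ⟨ha, hb ▸ h0, Or.inr hb⟩
  have hinter : (({0} ×ˢ F) ∩ (F ×ˢ {0})) = {((0 : K), (0 : K))} := by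
    ext ⟨a, b⟩
    simp only [mem_inter, mem_product, mem_singleton, Prod.mk.injEq, hFdef, mem_filter, mem_univ,
      true_and]
    constructor
    · rintro ⟨⟨ha, _⟩, _, hb⟩; exact ⟨ha, hb⟩
    · rintro ⟨ha, hb⟩; exact ⟨⟨ha, hb ▸ h0⟩, ha ▸ h0, hb⟩
  have hu := card_union_add_card_inter ({0} ×ˢ F) (F ×ˢ {0})
  rw [hinter] at hu
  have hFcard : F.card = q := hF
  rw [hs]
  have h1 : (({0} : Finset K) ×ˢ F).card = q := by
    rw [card_product, card_singleton, one_mul, hFcard]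
  have h2 : (F ×ˢ ({0} : Finset K)).card = q := by
    rw [card_product, card_singleton, mul_one, hFcard]
  rw [h1, h2, card_singleton] at hu
  omega

open Finset in
private lemma stmt10_Z0 (q : ℕ) (hq1 : 1 < q) (K : Type*) [Field K] [Fintype K]
    [DecidableEq K] (hK : Fintype.card K = q ^ 2)
    (hF : (univ.filter fun x : K => x ^ q = x).card = q) :
    (univ.filter fun x : K × K × K =>
        x.1 ^ q = x.1 ∧ x.2.2 ^ q = x.2.2 ∧ x.1 * x.2.2 = x.2.1 ^ (q + 1)).card
      = q ^ 3 - q ^ 2 + q := by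
  have hpowcard : ∀ a : K, a ^ (q ^ 2) = a := by
    intro a; rw [← hK]; exact FiniteField.pow_card a
  have hnorm : ∀ a : K, (a ^ (q + 1)) ^ q = a ^ (q + 1) := by
    intro a
    rw [← pow_mul]
    have : (q + 1) * q = q ^ 2 + q := by ring
    rw [this, pow_add, hpowcard, pow_succ, mul_comm]
  set Z0 := univ.filter fun x : K × K × K =>
      x.1 ^ q = x.1 ∧ x.2.2 ^ q = x.2.2 ∧ x.1 * x.2.2 = x.2.1 ^ (q + 1) with hZ0
  have hfib := card_eq_sum_card_fiberwise (f := fun x : K × K × K => x.2.1) (s := Z0)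
    (t := univ) (fun x _ => mem_univ _)
  have hfibcard : ∀ a : K, (Z0.filter fun x => x.2.1 = a).card
      = if a = 0 then 2 * q - 1 else q - 1 := by
    intro a
    have hbij : (Z0.filter fun x => x.2.1 = a).card
        = (univ.filter fun y : K × K =>
            y.1 ^ q = y.1 ∧ y.2 ^ q = y.2 ∧ y.1 * y.2 = a ^ (q + 1)).card := by
      apply card_nbij' (fun x : K × K × K => (x.1, x.2.2)) (fun y : K × K => (y.1, a, y.2))
      · rintro ⟨x1, x2, x3⟩ hx
        simp only [hZ0, mem_coe, mem_filter, mem_univ, true_and] at hx ⊢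
        obtain ⟨⟨u, v, w⟩, rfl⟩ := hx
        exact ⟨u, v, w⟩
      · rintro ⟨y1, y3⟩ hy
        simp only [hZ0, mem_coe, mem_filter, mem_univ, true_and] at hy ⊢
        exact ⟨⟨hy.1, hy.2.1, hy.2.2⟩, trivial⟩
      · rintro ⟨x1, x2, x3⟩ hx
        simp only [hZ0, mem_coe, mem_filter, mem_univ, true_and] at hx
        simp [hx.2]
      · rintro ⟨y1, y3⟩ _
        rfl
    rw [hbij]
    by_cases ha : a = 0
    · rw [if_pos ha, ha]
      have : (0 : K) ^ (q + 1) = 0 := zero_pow (by omega)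
      rw [this]
      exact stmt10_pairs_zero q hq1 K hF
    · rw [if_neg ha]
      exact stmt10_pairs_ne q hq1 K hF _ (hnorm a) (pow_ne_zero _ ha)
  rw [hfib]
  rw [Finset.sum_congr rfl fun a _ => hfibcard a]
  rw [Finset.sum_ite, Finset.sum_const, Finset.sum_const]
  have hc1 : (univ.filter fun a : K => a = 0).card = 1 := by
    rw [Finset.filter_eq']
    simp
  have hc2 : (univ.filter fun a : K => ¬a = 0).card = q ^ 2 - 1 := by
    have := Finset.card_filter_add_card_filter_not (s := (univ : Finset K))
      (p := fun a : K => a = 0)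
    rw [Finset.card_univ, hK] at this
    omega
  rw [hc1, hc2, smul_eq_mul, smul_eq_mul]
  have e1 : 1 ≤ q := by omega
  have e2 : 1 ≤ q ^ 2 := Nat.one_le_pow _ _ (by omega)
  have e3 : q ^ 2 ≤ q ^ 3 := Nat.pow_le_pow_right (by omega) (by omega)
  have e4 : 1 ≤ 2 * q := by omega
  zify [e1, e2, e3, e4]
  ring

set_option maxHeartbeats 1000000 in
/-- If f₀ + f₂^{q+1} - f₁f₃ = 0, then f = f₀ + f₁X₁ + f₂X₂ + f₂^qX₂^q + f₃X₃ +
    (X₁X₃ - X₂^{q+1}) is nonzero on exactly q⁴ - q³ + q² - q Hermitian matrices. -/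
theorem stmt10 (q : ℕ) (hq : ∃ p n : ℕ, p.Prime ∧ 0 < n ∧ q = p ^ n)
    (K : Type*) [Field K] [Fintype K] (hK : Fintype.card K = q ^ 2)
    (f0 f1 f3 : K) (h0 : f0 ^ q = f0) (h1 : f1 ^ q = f1) (h3 : f3 ^ q = f3)
    (f2 : K) (hcond : f0 + f2 ^ (q + 1) - f1 * f3 = 0) :
    {x : K × K × K | x.1 ^ q = x.1 ∧ x.2.2 ^ q = x.2.2 ∧
        f0 + f1 * x.1 + f2 * x.2.1 + f2 ^ q * x.2.1 ^ q + f3 * x.2.2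
          + (x.1 * x.2.2 - x.2.1 ^ (q + 1)) ≠ 0}.ncard
      = q ^ 4 - q ^ 3 + q ^ 2 - q := by
  classical
  obtain ⟨p, n, hp, hn, hqe⟩ := hq
  have hq1 : 1 < q := hqe ▸ Nat.one_lt_pow hn.ne' hp.one_lt
  -- characteristic
  haveI hcharP : CharP K p := by
    obtain ⟨m, hm, hcard⟩ := FiniteField.card K (ringChar K)
    have hd : p ∣ ringChar K := by
      have : p ∣ (ringChar K) ^ (m : ℕ) := by
        rw [← hcard, hK, hqe, ← pow_mul]
        exact dvd_pow_self p (by positivity)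
      exact hp.dvd_of_dvd_pow this
    have : p = ringChar K := (Nat.prime_dvd_prime_iff_eq hp hm).mp hd
    rw [this]; exact ringChar.charP K
  haveI : Fact p.Prime := ⟨hp⟩
  have hadd : ∀ x y : K, (x + y) ^ q = x ^ q + y ^ q := by
    intro x y; rw [hqe]; exact add_pow_char_pow (R := K) (p := p) (x := x) (y := y) (n := n)
  have hsub : ∀ x y : K, (x - y) ^ q = x ^ q - y ^ q := by
    intro x y; rw [hqe]; exact sub_pow_char_pow x y n
  have hpowcard : ∀ a : K, a ^ (q ^ 2) = a := by
    intro a; rw [← hK]; exact FiniteField.pow_card a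
  have hf2 : (f2 ^ q) ^ q = f2 := by
    rw [← pow_mul, ← sq, hpowcard]
  have hF := stmt10_cardF q p n hp hn hqe K hK
  -- the key algebraic identity
  have key : ∀ x1 x2 x3 : K,
      f0 + f1 * x1 + f2 * x2 + f2 ^ q * x2 ^ q + f3 * x3 + (x1 * x3 - x2 ^ (q + 1))
        = (x1 + f3) * (x3 + f1) - (x2 - f2 ^ q) ^ (q + 1) := by
    intro x1 x2 x3
    have e1 : (x2 - f2 ^ q) ^ (q + 1) = (x2 ^ q - f2) * (x2 - f2 ^ q) := by
      rw [pow_succ, hsub, hf2]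
    rw [e1]
    have hx2 : x2 ^ (q + 1) = x2 ^ q * x2 := pow_succ x2 q
    rw [hx2]
    linear_combination hcond
  -- convert set to finset
  have hsetf : {x : K × K × K | x.1 ^ q = x.1 ∧ x.2.2 ^ q = x.2.2 ∧
      f0 + f1 * x.1 + f2 * x.2.1 + f2 ^ q * x.2.1 ^ q + f3 * x.2.2
        + (x.1 * x.2.2 - x.2.1 ^ (q + 1)) ≠ 0}
      = ↑(Finset.univ.filter fun x : K × K × K => x.1 ^ q = x.1 ∧ x.2.2 ^ q = x.2.2 ∧
          f0 + f1 * x.1 + f2 * x.2.1 + f2 ^ q * x.2.1 ^ q + f3 * x.2.2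
            + (x.1 * x.2.2 - x.2.1 ^ (q + 1)) ≠ 0) := by
    ext x
    simp
  rw [hsetf, Set.ncard_coe_finset]
  -- bijection to the standard form
  have hbij : (Finset.univ.filter fun x : K × K × K => x.1 ^ q = x.1 ∧ x.2.2 ^ q = x.2.2 ∧
      f0 + f1 * x.1 + f2 * x.2.1 + f2 ^ q * x.2.1 ^ q + f3 * x.2.2
        + (x.1 * x.2.2 - x.2.1 ^ (q + 1)) ≠ 0).card
      = (Finset.univ.filter fun y : K × K × K => y.1 ^ q = y.1 ∧ y.2.2 ^ q = y.2.2 ∧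
          y.1 * y.2.2 ≠ y.2.1 ^ (q + 1)).card := by
    apply Finset.card_nbij' (fun x : K × K × K => (x.1 + f3, x.2.1 - f2 ^ q, x.2.2 + f1))
      (fun y : K × K × K => (y.1 - f3, y.2.1 + f2 ^ q, y.2.2 - f1))
    · rintro ⟨x1, x2, x3⟩ hx
      simp only [Finset.mem_coe, Finset.mem_filter, Finset.mem_univ, true_and] at hx ⊢
      obtain ⟨u, v, w⟩ := hx
      refine ⟨by rw [hadd, u, h3], by rw [hadd, v, h1], ?_⟩
      rw [← sub_ne_zero]
      rw [key x1 x2 x3] at w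
      exact w
    · rintro ⟨y1, y2, y3⟩ hy
      simp only [Finset.mem_coe, Finset.mem_filter, Finset.mem_univ, true_and] at hy ⊢
      obtain ⟨u, v, w⟩ := hy
      refine ⟨by rw [hsub, u, h3], by rw [hsub, v, h1], ?_⟩
      rw [key]
      have e1 : y1 - f3 + f3 = y1 := by ring
      have e2 : y2 + f2 ^ q - f2 ^ q = y2 := by ring
      have e3 : y3 - f1 + f1 = y3 := by ring
      rw [e1, e2, e3]
      rw [sub_ne_zero]
      exact w
    · rintro ⟨x1, x2, x3⟩ _
      simp only [Prod.mk.injEq]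
      refine ⟨by ring, by ring, by ring⟩
    · rintro ⟨y1, y2, y3⟩ _
      simp only [Prod.mk.injEq]
      refine ⟨by ring, by ring, by ring⟩
  rw [hbij]
  -- count via complement
  set T := Finset.univ.filter fun x : K × K × K => x.1 ^ q = x.1 ∧ x.2.2 ^ q = x.2.2 with hT
  have hTcard : T.card = q ^ 4 := by
    have : T = (Finset.univ.filter fun x : K => x ^ q = x) ×ˢ
        (Finset.univ ×ˢ (Finset.univ.filter fun x : K => x ^ q = x)) := by
      ext ⟨a, b, c⟩
      simp only [hT, Finset.mem_filter, Finset.mem_univ, true_and, Finset.mem_product]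
    rw [this, Finset.card_product, Finset.card_product, hF, Finset.card_univ, hK]
    ring
  have hsplit := Finset.card_filter_add_card_filter_not (s := T)
    (p := fun x : K × K × K => x.1 * x.2.2 = x.2.1 ^ (q + 1))
  have hZeq : T.filter (fun x : K × K × K => x.1 * x.2.2 = x.2.1 ^ (q + 1))
      = Finset.univ.filter fun x : K × K × K =>
          x.1 ^ q = x.1 ∧ x.2.2 ^ q = x.2.2 ∧ x.1 * x.2.2 = x.2.1 ^ (q + 1) := by
    rw [hT, Finset.filter_filter]
    apply Finset.filter_congr
    intro x _
    tauto
  have hSeq : T.filter (fun x : K × K × K => ¬(x.1 * x.2.2 = x.2.1 ^ (q + 1)))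
      = Finset.univ.filter fun y : K × K × K => y.1 ^ q = y.1 ∧ y.2.2 ^ q = y.2.2 ∧
          y.1 * y.2.2 ≠ y.2.1 ^ (q + 1) := by
    rw [hT, Finset.filter_filter]
    apply Finset.filter_congr
    intro x _
    tauto
  rw [hZeq, hSeq] at hsplit
  have hZcard := stmt10_Z0 q hq1 K hK hF
  rw [hZcard, hTcard] at hsplit
  have e2 : 1 ≤ q ^ 2 := Nat.one_le_pow _ _ (by omega)
  have e3 : q ^ 2 ≤ q ^ 3 := Nat.pow_le_pow_right (by omega) (by omega)
  have e4 : q ^ 3 ≤ q ^ 4 := Nat.pow_le_pow_right (by omega) (by omega)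
  have e5 : q ≤ q ^ 2 := by
    calc q = q ^ 1 := (pow_one q).symm
    _ ≤ q ^ 2 := Nat.pow_le_pow_right (by omega) (by omega)
  omega
end

section
/- Let q be a prime power, ℓ = 2, and f(X₁,X₂,X₃) = f₀ + f₁X₁ + f₂X₂ + f₂^qX₂^q + f₃X₃ + (X₁X₃ − X₂^{q+1}) with f₀,f₁,f₃ ∈ F_q, f₂ ∈ F_{q^2}. If f₀ + f₂^{q+1} − f₁f₃ ≠ 0, then the number of 2×2 Hermitian matrices on which f is nonzero equals exactly q⁴ − q³ − q. -/
open Finset Polynomial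

open Finset Polynomial

lemma aux_card_pow_le {K : Type*} [Field K] [Fintype K] [DecidableEq K]
    (n : ℕ) (hn : 0 < n) (a : K) :
    (Finset.univ.filter (fun x : K => x ^ n = a)).card ≤ n := by
  have hsub : Finset.univ.filter (fun x : K => x ^ n = a)
      ⊆ (Polynomial.nthRoots n a).toFinset := by
    intro x hx
    simp only [Finset.mem_filter] at hx
    rw [Multiset.mem_toFinset, Polynomial.mem_nthRoots hn]
    exact hx.2
  calc (Finset.univ.filter (fun x : K => x ^ n = a)).card
      ≤ (Polynomial.nthRoots n a).toFinset.card := Finset.card_le_card hsub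
    _ ≤ Multiset.card (Polynomial.nthRoots n a) := Multiset.toFinset_card_le _
    _ ≤ n := Polynomial.card_nthRoots n a

lemma aux_fact {q : ℕ} (hq2 : 2 ≤ q) : q ^ 2 - 1 = (q + 1) * (q - 1) := by
  obtain ⟨m, rfl⟩ : ∃ m, q = m + 2 := ⟨q - 2, by omega⟩
  have h1 : (m + 2) ^ 2 = m * m + 4 * m + 4 := by ring
  have h2 : (m + 2 + 1) * (m + 2 - 1) = m * m + 4 * m + 3 := by
    show (m + 3) * (m + 1) = _; ring
  rw [h1, h2]
  exact Nat.sub_eq_of_eq_add (by ring)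

lemma aux_cardF {K : Type*} [Field K] [Fintype K] [DecidableEq K] {q : ℕ}
    (hq2 : 2 ≤ q) (hK : Fintype.card K = q ^ 2) :
    (Finset.univ.filter (fun x : K => x ^ q = x)).card = q := by
  have hq1 : 1 < q := hq2
  -- upper bound
  have hub : (Finset.univ.filter (fun x : K => x ^ q = x)).card ≤ q := by
    have hne : (X ^ q - X : K[X]) ≠ 0 := FiniteField.X_pow_card_sub_X_ne_zero K hq1
    have hsub : Finset.univ.filter (fun x : K => x ^ q = x)
        ⊆ (X ^ q - X : K[X]).roots.toFinset := by
      intro x hx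
      simp only [Finset.mem_filter] at hx
      rw [Multiset.mem_toFinset, Polynomial.mem_roots hne]
      simp [Polynomial.IsRoot, sub_eq_zero, hx.2]
    calc (Finset.univ.filter (fun x : K => x ^ q = x)).card
        ≤ (X ^ q - X : K[X]).roots.toFinset.card := Finset.card_le_card hsub
      _ ≤ Multiset.card (X ^ q - X : K[X]).roots := Multiset.toFinset_card_le _
      _ ≤ (X ^ q - X : K[X]).natDegree := Polynomial.card_roots' _
      _ = q := FiniteField.X_pow_card_sub_X_natDegree_eq K hq1
  -- lower bound
  have hlb : q ≤ (Finset.univ.filter (fun x : K => x ^ q = x)).card := by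
    obtain ⟨g, hg⟩ := IsCyclic.exists_generator (α := Kˣ)
    have hog : orderOf g = q ^ 2 - 1 := by
      rw [orderOf_eq_card_of_forall_mem_zpowers hg, Nat.card_eq_fintype_card, Fintype.card_units, hK]
    have hdvd : q + 1 ∣ q ^ 2 - 1 := ⟨q - 1, aux_fact hq2⟩
    have hoh : orderOf (g ^ (q + 1)) = q - 1 := by
      rw [orderOf_pow_of_dvd (by omega) (hog ▸ hdvd), hog, aux_fact hq2,
        Nat.mul_div_cancel_left _ (by omega)]
    set h := g ^ (q + 1) with hh
    have hpow : h ^ (q - 1) = 1 := by rw [← hoh]; exact pow_orderOf_eq_one h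
    have hmem : ∀ i : ℕ, ((h : K) ^ i) ^ q = (h : K) ^ i := by
      intro i
      have h1 : ((h : K) ^ i) ^ (q - 1) = 1 := by
        have : (h ^ i) ^ (q - 1) = 1 := by
          rw [← pow_mul, mul_comm, pow_mul, hpow, one_pow]
        calc ((h : K) ^ i) ^ (q - 1) = (((h ^ i) ^ (q - 1) : Kˣ) : K) := by push_cast; ring
          _ = 1 := by rw [this]; rfl
      calc ((h : K) ^ i) ^ q = ((h : K) ^ i) ^ (q - 1 + 1) := by rw [Nat.sub_add_cancel (by omega)]
        _ = ((h : K) ^ i) ^ (q - 1) * ((h : K) ^ i) := by rw [pow_succ]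
        _ = (h : K) ^ i := by rw [h1, one_mul]
    have hinj : Set.InjOn (fun i : ℕ => (h : K) ^ i) (Finset.range (q - 1) : Set ℕ) := by
      intro i hi j hj hij
      simp only [Finset.coe_range, Set.mem_Iio] at hi hj
      have : h ^ i = h ^ j := Units.ext (by push_cast at hij ⊢; exact hij)
      exact pow_injOn_Iio_orderOf (by rwa [Set.mem_Iio, hoh]) (by rwa [Set.mem_Iio, hoh]) this
    have himage : (Finset.range (q - 1)).image (fun i : ℕ => (h : K) ^ i)
        ⊆ (Finset.univ.filter (fun x : K => x ^ q = x)).erase 0 := by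
      intro x hx
      simp only [Finset.mem_image] at hx
      obtain ⟨i, _, rfl⟩ := hx
      refine Finset.mem_erase.2 ⟨?_, Finset.mem_filter.2 ⟨Finset.mem_univ _, hmem i⟩⟩
      exact pow_ne_zero _ (Units.ne_zero h)
    have hcard : q - 1 ≤ ((Finset.univ.filter (fun x : K => x ^ q = x)).erase 0).card := by
      calc q - 1 = ((Finset.range (q - 1)).image (fun i : ℕ => (h : K) ^ i)).card := by
            rw [Finset.card_image_of_injOn hinj, Finset.card_range]
        _ ≤ _ := Finset.card_le_card himage
    have h0 : (0 : K) ∈ Finset.univ.filter (fun x : K => x ^ q = x) := by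
      simp [zero_pow (by omega : q ≠ 0)]
    have := Finset.card_erase_of_mem h0
    omega
  omega

lemma aux_norm_in_F {K : Type*} [Field K] [Fintype K] {q : ℕ}
    (hK : Fintype.card K = q ^ 2) (u : K) : (u ^ (q + 1)) ^ q = u ^ (q + 1) := by
  have h2 : u ^ (q ^ 2) = u := by rw [← hK]; exact FiniteField.pow_card u
  calc (u ^ (q + 1)) ^ q = u ^ (q ^ 2 + q) := by rw [← pow_mul]; ring_nf
    _ = u ^ (q ^ 2) * u ^ q := pow_add u _ _
    _ = u * u ^ q := by rw [h2]
    _ = u ^ (q + 1) := by rw [pow_succ, mul_comm]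

lemma aux_norm_fiber {K : Type*} [Field K] [Fintype K] [DecidableEq K] {q : ℕ}
    (hq2 : 2 ≤ q) (hK : Fintype.card K = q ^ 2)
    {a : K} (ha : a ^ q = a) (ha0 : a ≠ 0) :
    (Finset.univ.filter (fun u : K => u ^ (q + 1) = a)).card = q + 1 := by
  set E := (Finset.univ.filter (fun x : K => x ^ q = x)).erase 0 with hE
  have hEcard : E.card = q - 1 := by
    rw [hE, Finset.card_erase_of_mem (by simp [zero_pow (by omega : q ≠ 0)]),
      aux_cardF hq2 hK]
  have H : ∀ u ∈ Finset.univ.erase (0 : K), u ^ (q + 1) ∈ E := by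
    intro u hu
    have hu0 : u ≠ 0 := (Finset.mem_erase.1 hu).1
    exact Finset.mem_erase.2 ⟨pow_ne_zero _ hu0,
      Finset.mem_filter.2 ⟨Finset.mem_univ _, aux_norm_in_F hK u⟩⟩
  have hsum : (Finset.univ.erase (0 : K)).card
      = ∑ b ∈ E, ((Finset.univ.erase (0 : K)).filter (fun u => u ^ (q + 1) = b)).card :=
    Finset.card_eq_sum_card_fiberwise H
  have hfib_eq : ∀ b ∈ E, (Finset.univ.erase (0 : K)).filter (fun u => u ^ (q + 1) = b)
      = Finset.univ.filter (fun u : K => u ^ (q + 1) = b) := by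
    intro b hb
    have hb0 : b ≠ 0 := (Finset.mem_erase.1 hb).1
    ext u
    simp only [Finset.mem_filter, Finset.mem_erase, Finset.mem_univ, true_and, and_true]
    constructor
    · rintro ⟨-, h⟩; exact h
    · intro h
      refine ⟨fun h0 => hb0 ?_, h⟩
      rw [h0] at h; rw [← h, zero_pow (by omega : q + 1 ≠ 0)]
  have hle : ∀ b ∈ E, (Finset.univ.filter (fun u : K => u ^ (q + 1) = b)).card ≤ q + 1 :=
    fun b _ => aux_card_pow_le (q + 1) (by omega) b
  have htot : (Finset.univ.erase (0 : K)).card = q ^ 2 - 1 := by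
    rw [Finset.card_erase_of_mem (Finset.mem_univ _), Finset.card_univ, hK]
  have hsum' : ∑ b ∈ E, (Finset.univ.filter (fun u : K => u ^ (q + 1) = b)).card
      = q ^ 2 - 1 := by
    rw [← htot, hsum]; exact Finset.sum_congr rfl fun b hb => by rw [hfib_eq b hb]
  have haE : a ∈ E := Finset.mem_erase.2 ⟨ha0, Finset.mem_filter.2 ⟨Finset.mem_univ _, ha⟩⟩
  by_contra hne
  have hlt : (Finset.univ.filter (fun u : K => u ^ (q + 1) = a)).card < q + 1 :=
    lt_of_le_of_ne (hle a haE) hne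
  have : ∑ b ∈ E, (Finset.univ.filter (fun u : K => u ^ (q + 1) = b)).card
      < ∑ _b ∈ E, (q + 1) := Finset.sum_lt_sum hle ⟨a, haE, hlt⟩
  rw [hsum', Finset.sum_const, smul_eq_mul, hEcard] at this
  rw [aux_fact hq2, mul_comm] at this
  omega

lemma aux_prod_zero {K : Type*} [Field K] [Fintype K] [DecidableEq K] {q : ℕ}
    (hq2 : 2 ≤ q) (hK : Fintype.card K = q ^ 2) :
    (Finset.univ.filter
      (fun y : K × K => y.1 ^ q = y.1 ∧ y.2 ^ q = y.2 ∧ y.1 * y.2 = 0)).card + 1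
      = 2 * q := by
  set F := Finset.univ.filter (fun x : K => x ^ q = x) with hF
  have hFcard : F.card = q := aux_cardF hq2 hK
  have h0F : (0 : K) ∈ F := by simp [hF, zero_pow (by omega : q ≠ 0)]
  have heq : Finset.univ.filter
      (fun y : K × K => y.1 ^ q = y.1 ∧ y.2 ^ q = y.2 ∧ y.1 * y.2 = 0)
      = ({0} ×ˢ F) ∪ (F ×ˢ {0}) := by
    ext y
    simp only [Finset.mem_filter, Finset.mem_univ, true_and, Finset.mem_union,
      Finset.mem_product, Finset.mem_singleton, hF]
    constructor
    · rintro ⟨h1, h2, h3⟩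
      rcases mul_eq_zero.1 h3 with h | h
      · exact Or.inl ⟨h, h2⟩
      · exact Or.inr ⟨h1, h⟩
    · rintro (⟨h1, h2⟩ | ⟨h1, h2⟩)
      · exact ⟨by rw [h1, zero_pow (by omega : q ≠ 0)], h2, by rw [h1, zero_mul]⟩
      · exact ⟨h1, by rw [h2, zero_pow (by omega : q ≠ 0)], by rw [h2, mul_zero]⟩
  have hinter : (({0} : Finset K) ×ˢ F) ∩ (F ×ˢ ({0} : Finset K)) = {((0 : K), (0 : K))} := by
    ext y
    simp only [Finset.mem_inter, Finset.mem_product, Finset.mem_singleton, Prod.ext_iff]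
    constructor
    · rintro ⟨⟨h1, -⟩, ⟨-, h2⟩⟩; exact ⟨h1, h2⟩
    · rintro ⟨h1, h2⟩; exact ⟨⟨h1, h2 ▸ h0F⟩, ⟨h1 ▸ h0F, h2⟩⟩
  have := Finset.card_union_add_card_inter (({0} : Finset K) ×ˢ F) (F ×ˢ ({0} : Finset K))
  rw [hinter, Finset.card_singleton, Finset.card_product, Finset.card_product,
    Finset.card_singleton, hFcard] at this
  rw [heq]
  omega

lemma aux_prod_ne {K : Type*} [Field K] [Fintype K] [DecidableEq K] {q : ℕ}
    (hq2 : 2 ≤ q) (hK : Fintype.card K = q ^ 2) {s : K} (hs : s ^ q = s) (hs0 : s ≠ 0) :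
    (Finset.univ.filter
      (fun y : K × K => y.1 ^ q = y.1 ∧ y.2 ^ q = y.2 ∧ y.1 * y.2 = s)).card + 1
      = q := by
  set E := (Finset.univ.filter (fun x : K => x ^ q = x)).erase 0 with hE
  have hEcard : E.card = q - 1 := by
    rw [hE, Finset.card_erase_of_mem (by simp [zero_pow (by omega : q ≠ 0)]),
      aux_cardF hq2 hK]
  have : E.card = (Finset.univ.filter
      (fun y : K × K => y.1 ^ q = y.1 ∧ y.2 ^ q = y.2 ∧ y.1 * y.2 = s)).card := by
    apply Finset.card_bij' (fun a _ => ((a, a⁻¹ * s) : K × K)) (fun y _ => y.1)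
    · intro a ha
      obtain ⟨ha0, haF⟩ := Finset.mem_erase.1 ha
      have haq : a ^ q = a := (Finset.mem_filter.1 haF).2
      refine Finset.mem_filter.2 ⟨Finset.mem_univ _, haq, ?_, ?_⟩
      · show (a⁻¹ * s) ^ q = a⁻¹ * s
        rw [mul_pow, inv_pow, haq, hs]
      · show a * (a⁻¹ * s) = s
        rw [← mul_assoc, mul_inv_cancel₀ ha0, one_mul]
    · intro y hy
      obtain ⟨-, h1, -, h3⟩ := Finset.mem_filter.1 hy
      refine Finset.mem_erase.2 ⟨?_, Finset.mem_filter.2 ⟨Finset.mem_univ _, h1⟩⟩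
      intro h0
      exact hs0 (by rw [← h3, h0, zero_mul])
    · intro a _; rfl
    · intro y hy
      obtain ⟨-, -, -, h3⟩ := Finset.mem_filter.1 hy
      have hy1 : y.1 ≠ 0 := fun h0 => hs0 (by rw [← h3, h0, zero_mul])
      have : y.1⁻¹ * s = y.2 := by rw [← h3, ← mul_assoc, inv_mul_cancel₀ hy1, one_mul]
      show (y.1, y.1⁻¹ * s) = y
      rw [this]
  omega



/-- If f₀ + f₂^{q+1} - f₁f₃ ≠ 0, then f = f₀ + f₁X₁ + f₂X₂ + f₂^qX₂^q + f₃X₃ +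
    (X₁X₃ - X₂^{q+1}) is nonzero on exactly q⁴ - q³ - q Hermitian matrices. -/
theorem stmt11 (q : ℕ) (hq : ∃ p n : ℕ, p.Prime ∧ 0 < n ∧ q = p ^ n)
    (K : Type*) [Field K] [Fintype K] (hK : Fintype.card K = q ^ 2)
    (f0 f1 f3 : K) (h0 : f0 ^ q = f0) (h1 : f1 ^ q = f1) (h3 : f3 ^ q = f3)
    (f2 : K) (hcond : f0 + f2 ^ (q + 1) - f1 * f3 ≠ 0) :
    {x : K × K × K | x.1 ^ q = x.1 ∧ x.2.2 ^ q = x.2.2 ∧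
        f0 + f1 * x.1 + f2 * x.2.1 + f2 ^ q * x.2.1 ^ q + f3 * x.2.2
          + (x.1 * x.2.2 - x.2.1 ^ (q + 1)) ≠ 0}.ncard
      = q ^ 4 - q ^ 3 - q := by
  classical
  obtain ⟨p, n, hp, hn, hqpn⟩ := hq
  have hq2 : 2 ≤ q := by
    rw [hqpn]; calc 2 ≤ p := hp.two_le
      _ = p ^ 1 := (pow_one p).symm
      _ ≤ p ^ n := Nat.pow_le_pow_right hp.pos hn
  -- characteristic
  haveI : CharP K (ringChar K) := ringChar.charP K
  obtain ⟨m, hr, hcard⟩ := FiniteField.card K (ringChar K)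
  have hpr : p = ringChar K := by
    have hdvd : p ∣ ringChar K ^ (m : ℕ) := by
      rw [← hcard, hK, hqpn, ← pow_mul]
      exact dvd_pow_self p (by omega)
    exact (Nat.prime_dvd_prime_iff_eq hp hr).1 (hp.dvd_of_dvd_pow hdvd)
  haveI : Fact p.Prime := ⟨hp⟩
  haveI : CharP K p := by rw [hpr]; exact ringChar.charP K
  have hadd : ∀ x y : K, (x + y) ^ q = x ^ q + y ^ q := by
    intro x y; rw [hqpn]; exact add_pow_char_pow x y p n
  have hsub : ∀ x y : K, (x - y) ^ q = x ^ q - y ^ q := by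
    intro x y; rw [hqpn]; exact sub_pow_char_pow x y n
  have hf2qq : (f2 ^ q) ^ q = f2 := by
    rw [← pow_mul, ← sq, ← hK]; exact FiniteField.pow_card f2
  have hcq : (f0 + f2 ^ (q + 1) - f1 * f3) ^ q = f0 + f2 ^ (q + 1) - f1 * f3 := by
    rw [hsub, hadd, mul_pow, h0, h1, h3, aux_norm_in_F hK f2]
  have key : ∀ b : K, (b - f2 ^ q) ^ (q + 1)
      = b ^ (q + 1) - f2 * b - f2 ^ q * b ^ q + f2 ^ (q + 1) := by
    intro b
    have e1 : (b - f2 ^ q) ^ (q + 1) = (b - f2 ^ q) ^ q * (b - f2 ^ q) := pow_succ _ q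
    rw [e1, hsub b (f2 ^ q), hf2qq]
    ring
  have hiden : ∀ x1 x2 x3 : K,
      (x1 + f3) * (x3 + f1) - ((x2 - f2 ^ q) ^ (q + 1) - (f0 + f2 ^ (q + 1) - f1 * f3))
      = f0 + f1 * x1 + f2 * x2 + f2 ^ q * x2 ^ q + f3 * x3 + (x1 * x3 - x2 ^ (q + 1)) := by
    intro x1 x2 x3
    rw [key x2]; ring
  set c : K := f0 + f2 ^ (q + 1) - f1 * f3 with hc
  -- convert ncard to Finset card
  have hset : {x : K × K × K | x.1 ^ q = x.1 ∧ x.2.2 ^ q = x.2.2 ∧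
      f0 + f1 * x.1 + f2 * x.2.1 + f2 ^ q * x.2.1 ^ q + f3 * x.2.2
        + (x.1 * x.2.2 - x.2.1 ^ (q + 1)) ≠ 0}
      = ↑(Finset.univ.filter (fun x : K × K × K => x.1 ^ q = x.1 ∧ x.2.2 ^ q = x.2.2 ∧
      f0 + f1 * x.1 + f2 * x.2.1 + f2 ^ q * x.2.1 ^ q + f3 * x.2.2
        + (x.1 * x.2.2 - x.2.1 ^ (q + 1)) ≠ 0)) := by
    ext x; simp [Set.mem_setOf_eq]
  rw [hset, Set.ncard_coe_finset]
  set A : Finset (K × K × K) :=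
    Finset.univ.filter (fun x : K × K × K => x.1 ^ q = x.1 ∧ x.2.2 ^ q = x.2.2) with hA
  have hAcard : A.card = q ^ 4 := by
    have : A = (Finset.univ.filter (fun x : K => x ^ q = x)) ×ˢ
        (Finset.univ ×ˢ (Finset.univ.filter (fun x : K => x ^ q = x))) := by
      ext x
      simp only [hA, Finset.mem_filter, Finset.mem_univ, true_and, Finset.mem_product]
    rw [this, Finset.card_product, Finset.card_product, Finset.card_univ, hK,
      aux_cardF hq2 hK]
    ring
  set Z : Finset (K × K × K) :=
    Finset.univ.filter (fun x : K × K × K => x.1 ^ q = x.1 ∧ x.2.2 ^ q = x.2.2 ∧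
      f0 + f1 * x.1 + f2 * x.2.1 + f2 ^ q * x.2.1 ^ q + f3 * x.2.2
        + (x.1 * x.2.2 - x.2.1 ^ (q + 1)) = 0) with hZ
  -- the split
  have hsplit : (Finset.univ.filter (fun x : K × K × K => x.1 ^ q = x.1 ∧ x.2.2 ^ q = x.2.2 ∧
      f0 + f1 * x.1 + f2 * x.2.1 + f2 ^ q * x.2.1 ^ q + f3 * x.2.2
        + (x.1 * x.2.2 - x.2.1 ^ (q + 1)) ≠ 0)).card + Z.card = A.card := by
    have e1 : Finset.univ.filter (fun x : K × K × K => x.1 ^ q = x.1 ∧ x.2.2 ^ q = x.2.2 ∧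
        f0 + f1 * x.1 + f2 * x.2.1 + f2 ^ q * x.2.1 ^ q + f3 * x.2.2
          + (x.1 * x.2.2 - x.2.1 ^ (q + 1)) ≠ 0)
        = A.filter (fun x : K × K × K =>
          ¬ (f0 + f1 * x.1 + f2 * x.2.1 + f2 ^ q * x.2.1 ^ q + f3 * x.2.2
            + (x.1 * x.2.2 - x.2.1 ^ (q + 1)) = 0)) := by
      ext x
      simp only [hA, Finset.mem_filter, Finset.mem_univ, true_and]
      tauto
    have e2 : Z = A.filter (fun x : K × K × K =>
        f0 + f1 * x.1 + f2 * x.2.1 + f2 ^ q * x.2.1 ^ q + f3 * x.2.2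
          + (x.1 * x.2.2 - x.2.1 ^ (q + 1)) = 0) := by
      ext x
      simp only [hZ, hA, Finset.mem_filter, Finset.mem_univ, true_and]
      tauto
    rw [e1, e2, Nat.add_comm]
    exact Finset.card_filter_add_card_filter_not _
  -- bijection Z ≃ Z'
  set Z' : Finset (K × K × K) :=
    Finset.univ.filter (fun x : K × K × K => x.1 ^ q = x.1 ∧ x.2.2 ^ q = x.2.2 ∧
      x.1 * x.2.2 = x.2.1 ^ (q + 1) - c) with hZ'
  have hZZ' : Z.card = Z'.card := by
    apply Finset.card_bij' (fun x _ => ((x.1 + f3, x.2.1 - f2 ^ q, x.2.2 + f1) : K × K × K))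
      (fun y _ => ((y.1 - f3, y.2.1 + f2 ^ q, y.2.2 - f1) : K × K × K))
    · intro x hx
      obtain ⟨-, e1, e2, e3⟩ := Finset.mem_filter.1 hx
      refine Finset.mem_filter.2 ⟨Finset.mem_univ _, ?_, ?_, ?_⟩
      · show (x.1 + f3) ^ q = x.1 + f3
        rw [hadd, e1, h3]
      · show (x.2.2 + f1) ^ q = x.2.2 + f1
        rw [hadd, e2, h1]
      · show (x.1 + f3) * (x.2.2 + f1) = (x.2.1 - f2 ^ q) ^ (q + 1) - c
        rw [← sub_eq_zero, hiden x.1 x.2.1 x.2.2, e3]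
    · intro y hy
      obtain ⟨-, e1, e2, e3⟩ := Finset.mem_filter.1 hy
      refine Finset.mem_filter.2 ⟨Finset.mem_univ _, ?_, ?_, ?_⟩
      · show (y.1 - f3) ^ q = y.1 - f3
        rw [hsub, e1, h3]
      · show (y.2.2 - f1) ^ q = y.2.2 - f1
        rw [hsub, e2, h1]
      · show f0 + f1 * (y.1 - f3) + f2 * (y.2.1 + f2 ^ q)
            + f2 ^ q * (y.2.1 + f2 ^ q) ^ q + f3 * (y.2.2 - f1)
            + ((y.1 - f3) * (y.2.2 - f1) - (y.2.1 + f2 ^ q) ^ (q + 1)) = 0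
        rw [← hiden (y.1 - f3) (y.2.1 + f2 ^ q) (y.2.2 - f1), sub_eq_zero]
        have r1 : y.1 - f3 + f3 = y.1 := by ring
        have r2 : y.2.1 + f2 ^ q - f2 ^ q = y.2.1 := by ring
        have r3 : y.2.2 - f1 + f1 = y.2.2 := by ring
        rw [r1, r2, r3, e3]
    · intro x _
      simp only [Prod.ext_iff]
      exact ⟨by ring, by ring, by ring⟩
    · intro y _
      simp only [Prod.ext_iff]
      exact ⟨by ring, by ring, by ring⟩
  -- count Z'
  have hfib : Z'.card = ∑ b ∈ Finset.univ,
      (Z'.filter (fun x : K × K × K => x.2.1 = b)).card :=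
    Finset.card_eq_sum_card_fiberwise (fun x _ => Finset.mem_univ x.2.1)
  have hfibval : ∀ b : K, (Z'.filter (fun x : K × K × K => x.2.1 = b)).card
      = (Finset.univ.filter (fun y : K × K =>
          y.1 ^ q = y.1 ∧ y.2 ^ q = y.2 ∧ y.1 * y.2 = b ^ (q + 1) - c)).card := by
    intro b
    apply Finset.card_bij' (fun x _ => ((x.1, x.2.2) : K × K))
      (fun y _ => ((y.1, b, y.2) : K × K × K))
    · intro x hx
      obtain ⟨hx1, hx2⟩ := Finset.mem_filter.1 hx
      obtain ⟨-, e1, e2, e3⟩ := Finset.mem_filter.1 hx1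
      exact Finset.mem_filter.2 ⟨Finset.mem_univ _, e1, e2, by rw [← hx2]; exact e3⟩
    · intro y hy
      obtain ⟨-, e1, e2, e3⟩ := Finset.mem_filter.1 hy
      exact Finset.mem_filter.2
        ⟨Finset.mem_filter.2 ⟨Finset.mem_univ _, e1, e2, e3⟩, rfl⟩
    · intro x hx
      obtain ⟨-, hx2⟩ := Finset.mem_filter.1 hx
      show ((x.1, b, x.2.2) : K × K × K) = x
      rw [← hx2]
    · intro y _; rfl
  have hsum2 : Z'.card
      = ∑ b ∈ Finset.univ.filter (fun b : K => b ^ (q + 1) = c),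
          (Finset.univ.filter (fun y : K × K =>
            y.1 ^ q = y.1 ∧ y.2 ^ q = y.2 ∧ y.1 * y.2 = b ^ (q + 1) - c)).card
        + ∑ b ∈ Finset.univ.filter (fun b : K => ¬ b ^ (q + 1) = c),
          (Finset.univ.filter (fun y : K × K =>
            y.1 ^ q = y.1 ∧ y.2 ^ q = y.2 ∧ y.1 * y.2 = b ^ (q + 1) - c)).card := by
    rw [hfib]
    rw [← Finset.sum_filter_add_sum_filter_not Finset.univ (fun b : K => b ^ (q + 1) = c)]
    congr 1
    · exact Finset.sum_congr rfl fun b _ => hfibval b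
    · exact Finset.sum_congr rfl fun b _ => hfibval b
  have hBcard : (Finset.univ.filter (fun b : K => b ^ (q + 1) = c)).card = q + 1 :=
    aux_norm_fiber hq2 hK hcq hcond
  have hBc : (Finset.univ.filter (fun b : K => b ^ (q + 1) = c)).card
      + (Finset.univ.filter (fun b : K => ¬ b ^ (q + 1) = c)).card = q ^ 2 := by
    rw [Finset.card_filter_add_card_filter_not, Finset.card_univ, hK]
  have hval0 : ∀ b ∈ Finset.univ.filter (fun b : K => b ^ (q + 1) = c),
      (Finset.univ.filter (fun y : K × K =>
        y.1 ^ q = y.1 ∧ y.2 ^ q = y.2 ∧ y.1 * y.2 = b ^ (q + 1) - c)).card + 1 = 2 * q := by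
    intro b hb
    have hb' : b ^ (q + 1) - c = 0 := by
      rw [(Finset.mem_filter.1 hb).2, sub_self]
    have heqf : Finset.univ.filter (fun y : K × K =>
        y.1 ^ q = y.1 ∧ y.2 ^ q = y.2 ∧ y.1 * y.2 = b ^ (q + 1) - c)
        = Finset.univ.filter (fun y : K × K =>
        y.1 ^ q = y.1 ∧ y.2 ^ q = y.2 ∧ y.1 * y.2 = 0) := by
      ext y
      simp only [Finset.mem_filter, hb']
    rw [heqf]
    exact aux_prod_zero hq2 hK
  have hvals : ∀ b ∈ Finset.univ.filter (fun b : K => ¬ b ^ (q + 1) = c),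
      (Finset.univ.filter (fun y : K × K =>
        y.1 ^ q = y.1 ∧ y.2 ^ q = y.2 ∧ y.1 * y.2 = b ^ (q + 1) - c)).card + 1 = q := by
    intro b hb
    have hb0 : b ^ (q + 1) - c ≠ 0 := sub_ne_zero.2 (Finset.mem_filter.1 hb).2
    have hbq : (b ^ (q + 1) - c) ^ q = b ^ (q + 1) - c := by
      rw [hsub, aux_norm_in_F hK b, hcq]
    exact aux_prod_ne hq2 hK hbq hb0
  -- arithmetic
  have hZ'card : Z'.card = q ^ 3 + q := by
    obtain ⟨t, rfl⟩ : ∃ t, q = t + 2 := ⟨q - 2, by omega⟩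
    set z0 := (Finset.univ.filter (fun y : K × K =>
        y.1 ^ (t + 2) = y.1 ∧ y.2 ^ (t + 2) = y.2 ∧ y.1 * y.2 = 0)).card with hz0def
    have hz0 : z0 + 1 = 2 * (t + 2) := aux_prod_zero hq2 hK
    have hsum0 : ∑ b ∈ Finset.univ.filter (fun b : K => b ^ (t + 2 + 1) = c),
        (Finset.univ.filter (fun y : K × K =>
          y.1 ^ (t + 2) = y.1 ∧ y.2 ^ (t + 2) = y.2 ∧ y.1 * y.2 = b ^ (t + 2 + 1) - c)).card
        = (t + 3) * z0 := by
      rw [Finset.sum_const_nat (m := z0) (fun b hb => by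
        have e := hval0 b hb
        omega), hBcard]
    have hsums : ∑ b ∈ Finset.univ.filter (fun b : K => ¬ b ^ (t + 2 + 1) = c),
        (Finset.univ.filter (fun y : K × K =>
          y.1 ^ (t + 2) = y.1 ∧ y.2 ^ (t + 2) = y.2 ∧ y.1 * y.2 = b ^ (t + 2 + 1) - c)).card
        = (Finset.univ.filter (fun b : K => ¬ b ^ (t + 2 + 1) = c)).card * (t + 1) := by
      exact Finset.sum_const_nat (m := t + 1) (fun b hb => by
        have e := hvals b hb
        omega)
    have hmcard : (Finset.univ.filter (fun b : K => ¬ b ^ (t + 2 + 1) = c)).card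
        = t * t + 3 * t + 1 := by
      have h2 : (t + 2) ^ 2 = t * t + 4 * t + 4 := by ring
      have := hBc
      rw [hBcard, h2] at this
      omega
    rw [hsum2, hsum0, hsums, hmcard]
    have hz0' : z0 = 2 * t + 3 := by omega
    rw [hz0']
    ring
  -- final arithmetic
  have hle : Z.card ≤ A.card := by omega
  have : (Finset.univ.filter (fun x : K × K × K => x.1 ^ q = x.1 ∧ x.2.2 ^ q = x.2.2 ∧
      f0 + f1 * x.1 + f2 * x.2.1 + f2 ^ q * x.2.1 ^ q + f3 * x.2.2
        + (x.1 * x.2.2 - x.2.1 ^ (q + 1)) ≠ 0)).card = q ^ 4 - (q ^ 3 + q) := by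
    apply Nat.eq_sub_of_add_eq
    rw [← hZ'card, ← hZZ', hsplit, hAcard]
  rw [this, Nat.sub_sub]
end

section
/- Let q be a prime power and ℓ ≥ 2. Then q^{ℓ²} − q^{ℓ²−1} − q^{ℓ²−3} ≥ ∏_{i=0}^{ℓ−1} (q^ℓ − q^i), i.e., the minimum distance of the affine Hermitian Grassmann code is at least that of the affine Grassmann code. -/
/-- d(C^H(ℓ)) = q^{ℓ²} - q^{ℓ²-1} - q^{ℓ²-3} is at least
    d(C^A(ℓ)) = ∏_{i=0}^{ℓ-1}(q^ℓ - q^i). -/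
theorem stmt13 (q ℓ : ℕ) (hq : ∃ p n : ℕ, p.Prime ∧ 0 < n ∧ q = p ^ n) (hℓ : 2 ≤ ℓ) :
    ∏ i ∈ Finset.range ℓ, ((q : ℤ) ^ ℓ - (q : ℤ) ^ i)
      ≤ (q : ℤ) ^ (ℓ ^ 2) - (q : ℤ) ^ (ℓ ^ 2 - 1) - (q : ℤ) ^ (ℓ ^ 2 - 3) := by
  obtain ⟨p, n, hp, hn, hqe⟩ := hq
  have hq2 : 2 ≤ q := hqe ▸ le_trans hp.two_le (Nat.le_self_pow (by omega) p)
  clear hqe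
  obtain ⟨m, rfl⟩ : ∃ m, ℓ = m + 2 := ⟨ℓ - 2, by omega⟩
  have hQ : (2:ℤ) ≤ (q:ℤ) := by exact_mod_cast hq2
  set Q := (q:ℤ) with hQdef
  have hQ1 : (1:ℤ) ≤ Q := by linarith
  have hQ0 : (0:ℤ) ≤ Q := by linarith
  set a := Q ^ m with ha
  have ha1 : (1:ℤ) ≤ a := one_le_pow₀ hQ1
  have ha0 : (0:ℤ) ≤ a := by linarith
  have hf1 : 0 ≤ Q ^ (m+2) - Q ^ m := sub_nonneg.mpr (pow_le_pow_right₀ hQ1 (by omega))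
  have hf2 : 0 ≤ Q ^ (m+2) - Q ^ (m+1) := sub_nonneg.mpr (pow_le_pow_right₀ hQ1 (by omega))
  have hC : (0:ℤ) ≤ Q ^ ((m+2)*m) := pow_nonneg hQ0 _
  have hprod : (∏ i ∈ Finset.range m, (Q ^ (m+2) - Q ^ i)) ≤ Q ^ ((m+2)*m) := by
    calc (∏ i ∈ Finset.range m, (Q ^ (m+2) - Q ^ i))
        ≤ ∏ i ∈ Finset.range m, Q ^ (m+2) := by
          apply Finset.prod_le_prod
          · intro i hi
            exact sub_nonneg.mpr (pow_le_pow_right₀ hQ1 (by simp at hi; omega))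
          · intro i hi
            have := pow_nonneg hQ0 i
            linarith
      _ = Q ^ ((m+2)*m) := by
          rw [Finset.prod_const, Finset.card_range, ← pow_mul]
  have key : Q ^ ((m+2)*m) * (Q ^ (m+2) - Q ^ m) * (Q ^ (m+2) - Q ^ (m+1))
      ≤ Q ^ ((m+2)^2) - Q ^ ((m+2)^2 - 1) - Q ^ ((m+2)^2 - 3) := by
    have e1 : (m+2)^2 = (m+2)*m + 2*m + 4 := by ring
    have e2 : (m+2)^2 - 1 = (m+2)*m + 2*m + 3 := by omega
    have e3 : (m+2)^2 - 3 = (m+2)*m + 2*m + 1 := by omega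
    have h2m : Q ^ (2*m) = a ^ 2 := by rw [ha, ← pow_mul, Nat.mul_comm]
    rw [e2, e3, e1, pow_add, pow_add, pow_add, pow_add, pow_add, pow_add, pow_add, pow_add,
      h2m, ← ha]
    have hpos : 0 ≤ Q ^ ((m+2)*m) * a ^ 2 * (Q ^ 2 - 2*Q) := by
      apply mul_nonneg (mul_nonneg hC (sq_nonneg a))
      nlinarith
    nlinarith [hpos]
  calc ∏ i ∈ Finset.range (m+2), (Q ^ (m+2) - Q ^ i)
      = (∏ i ∈ Finset.range m, (Q ^ (m+2) - Q ^ i)) * (Q ^ (m+2) - Q ^ m)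
          * (Q ^ (m+2) - Q ^ (m+1)) := by
        rw [Finset.prod_range_succ, Finset.prod_range_succ]
    _ ≤ Q ^ ((m+2)*m) * (Q ^ (m+2) - Q ^ m) * (Q ^ (m+2) - Q ^ (m+1)) := by
        apply mul_le_mul_of_nonneg_right _ hf2
        exact mul_le_mul_of_nonneg_right hprod hf1
    _ ≤ _ := key
end

section
/- Let q be a prime power, ℓ ≥ 1, and let C be the F_{q^2}-linear code obtained by evaluating all F_{q^2}-linear combinations of minors det_{I,J}(X) (I,J ⊆ [ℓ], |I| = |J|) of the generic ℓ×ℓ Hermitian matrix X at all ℓ×ℓ Hermitian matrices over F_{q^2}. Then the evaluation map is injective, so dim C = C(2ℓ, ℓ). -/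
/-- The index set of minors: pairs of row/column subsets of equal size. -/
def MinorIndex (ℓ : ℕ) :=
  {p : Finset (Fin ℓ) × Finset (Fin ℓ) // p.1.card = p.2.card}

noncomputable instance (ℓ : ℕ) : Fintype (MinorIndex ℓ) := by
  unfold MinorIndex; exact Fintype.ofFinite _

/-- The minor det_{I,J}(H) of a matrix H, on rows I and columns J. -/
noncomputable def minorAt {K : Type*} [Field K] {ℓ : ℕ}
    (H : Matrix (Fin ℓ) (Fin ℓ) K) (p : MinorIndex ℓ) : K :=
  (Matrix.of fun a b : Fin p.1.1.card =>
    H (p.1.1.orderEmbOfFin rfl a) (p.1.2.orderEmbOfFin p.2.symm b)).det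

/-- Evaluation of an F_{q²}-linear combination of minors of the generic Hermitian
    matrix at all ℓ×ℓ Hermitian matrices. -/
noncomputable def hermEval (q ℓ : ℕ) (K : Type*) [Field K]
    (f : MinorIndex ℓ → K)
    (H : {H : Matrix (Fin ℓ) (Fin ℓ) K // ∀ i j, H j i = (H i j) ^ q}) : K :=
  ∑ p : MinorIndex ℓ, f p * minorAt H.1 p

namespace Stmt15Aux


open MvPolynomial

lemma exists_eval_ne_zero_fin {K : Type*} [Field K] :
    ∀ (n : ℕ) (S : Fin n → Finset K) (P : MvPolynomial (Fin n) K), P ≠ 0 →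
      (∀ i, P.degreeOf i < (S i).card) →
      ∃ φ : Fin n → K, (∀ i, φ i ∈ S i) ∧ eval φ P ≠ 0 := by
  intro n
  induction n with
  | zero =>
    intro S P hP _
    obtain ⟨a, rfl⟩ := C_surjective (Fin 0) P
    refine ⟨fun i => i.elim0, fun i => i.elim0, ?_⟩
    have ha : a ≠ 0 := fun h => hP (by rw [h, map_zero])
    simpa using ha
  | succ n ih =>
    intro S P hP hdeg
    set Q := finSuccEquiv K n P with hQdef
    have hQ : Q ≠ 0 := by
      intro h
      apply hP
      have := (finSuccEquiv K n).injective (a₁ := P) (a₂ := 0) (by rw [← hQdef, h, map_zero])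
      exact this
    have hlead : Q.leadingCoeff ≠ 0 := Polynomial.leadingCoeff_ne_zero.2 hQ
    obtain ⟨ψ, hψmem, hψ⟩ := ih (fun i => S i.succ) Q.leadingCoeff hlead (fun i =>
      lt_of_le_of_lt (by simpa [hQdef] using degreeOf_coeff_finSuccEquiv P i Q.natDegree)
        (hdeg i.succ))
    set q1 : Polynomial K := Q.map (eval ψ) with hq1def
    have hcoeff : q1.coeff Q.natDegree ≠ 0 := by
      rw [hq1def, Polynomial.coeff_map]; exact hψ
    have hq1 : q1 ≠ 0 := fun h => hcoeff (by rw [h, Polynomial.coeff_zero])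
    have hdle : q1.natDegree < (S 0).card := by
      refine lt_of_le_of_lt Polynomial.natDegree_map_le ?_
      rw [hQdef, natDegree_finSuccEquiv]; exact hdeg 0
    have hex : ∃ a ∈ S 0, Polynomial.eval a q1 ≠ 0 := by
      by_contra h
      push_neg at h
      exact hq1 (Polynomial.eq_zero_of_natDegree_lt_card_of_eval_eq_zero' q1 (S 0) h hdle)
    obtain ⟨a, haS, ha⟩ := hex
    refine ⟨Fin.cons a ψ, ?_, ?_⟩
    · intro i
      refine Fin.cases ?_ ?_ i
      · simpa using haS
      · intro j; simpa using hψmem j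
    · rw [eval_eq_eval_mv_eval']; exact ha

lemma exists_eval_ne_zero {K V : Type*} [Field K] [Fintype V] [DecidableEq V] (S : V → Finset K)
    (P : MvPolynomial V K) (hP : P ≠ 0) (hdeg : ∀ v, P.degreeOf v < (S v).card) :
    ∃ φ : V → K, (∀ v, φ v ∈ S v) ∧ eval φ P ≠ 0 := by
  obtain ⟨e⟩ := Fintype.truncEquivFin V
  have hre : Function.Injective (e : V → Fin _) := e.injective
  set P' := rename (e : V → Fin _) P with hP'def
  have hP' : P' ≠ 0 := by
    intro h
    apply hP
    have := (renameEquiv K e).injective (a₁ := P) (a₂ := 0) (by simpa [renameEquiv] using h)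
    exact this
  have hdeg' : ∀ i, degreeOf i P' < (S (e.symm i)).card := by
    intro i
    have h1 : degreeOf i P' = degreeOf (e.symm i) P := by
      conv_lhs => rw [show i = e (e.symm i) by simp]
      exact degreeOf_rename_of_injective hre _
    rw [h1]; exact hdeg _
  obtain ⟨φ', hmem, hval⟩ := exists_eval_ne_zero_fin _ (fun i => S (e.symm i)) P' hP' hdeg'
  refine ⟨φ' ∘ e, fun v => ?_, ?_⟩
  · simpa using hmem (e v)
  · rwa [hP'def, eval_rename] at hval



lemma card_minorIndex (ℓ : ℕ) : Fintype.card (MinorIndex ℓ) = Nat.choose (2 * ℓ) ℓ := by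
  classical
  have h0 : Fintype.card (MinorIndex ℓ) =
      Fintype.card {p : Finset (Fin ℓ) × Finset (Fin ℓ) // p.1.card = p.2.card} :=
    Fintype.card_congr (Equiv.cast (by unfold MinorIndex; rfl))
  rw [h0, Fintype.card_subtype, Finset.card_filter, Fintype.sum_prod_type]
  have hinner : ∀ I : Finset (Fin ℓ),
      (∑ J : Finset (Fin ℓ), if I.card = J.card then (1:ℕ) else 0) = ℓ.choose I.card := by
    intro I
    calc (∑ J : Finset (Fin ℓ), if I.card = J.card then (1:ℕ) else 0)
        = (Finset.univ.filter fun J : Finset (Fin ℓ) => I.card = J.card).card :=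
          (Finset.card_filter _ _).symm
      _ = (Finset.powersetCard I.card (Finset.univ : Finset (Fin ℓ))).card := by
          congr 1
          rw [Finset.powersetCard_eq_filter, Finset.powerset_univ]
          exact Finset.filter_congr (fun J _ => by rw [eq_comm])
      _ = ℓ.choose I.card := by
          rw [Finset.card_powersetCard, Finset.card_univ, Fintype.card_fin]
  rw [Finset.sum_congr rfl (fun I _ => hinner I)]
  rw [show (Finset.univ : Finset (Finset (Fin ℓ))) = (Finset.univ : Finset (Fin ℓ)).powerset from
    (Finset.powerset_univ).symm]
  rw [Finset.sum_powerset, Finset.card_univ, Fintype.card_fin]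
  have hconst : ∀ j ∈ Finset.range (ℓ + 1),
      (∑ t ∈ Finset.powersetCard j (Finset.univ : Finset (Fin ℓ)), ℓ.choose t.card)
        = ℓ.choose j * ℓ.choose j := by
    intro j _
    rw [Finset.sum_congr rfl (fun t ht => by
      rw [(Finset.mem_powersetCard.1 ht).2])]
    rw [Finset.sum_const, smul_eq_mul, Finset.card_powersetCard, Finset.card_univ,
      Fintype.card_fin]
  rw [Finset.sum_congr rfl hconst, two_mul, Nat.add_choose_eq,
    Finset.Nat.sum_antidiagonal_eq_sum_range_succ_mk]
  refine Finset.sum_congr rfl fun k hk => ?_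
  rw [Nat.choose_symm (Nat.lt_succ_iff.1 (Finset.mem_range.1 hk))]



open MvPolynomial

/-- Variables of the generic Hermitian matrix: pairs (i,j) with i ≤ j. -/
abbrev HVar (ℓ : ℕ) := {ij : Fin ℓ × Fin ℓ // ij.1 ≤ ij.2}

variable {ℓ : ℕ}

open scoped Classical

/-- The variable attached to position (i,j). -/
def hv (i j : Fin ℓ) : HVar ℓ :=
  if h : i ≤ j then ⟨(i, j), h⟩ else ⟨(j, i), le_of_not_ge h⟩

/-- The exponent attached to position (i,j): 1 above the diagonal, q below. -/
def hexp (q : ℕ) (i j : Fin ℓ) : ℕ := if i ≤ j then 1 else q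

/-- Row embedding of a minor index. -/
noncomputable def rEmb (p : MinorIndex ℓ) : Fin p.1.1.card ↪o Fin ℓ :=
  p.1.1.orderEmbOfFin rfl

/-- Column embedding of a minor index. -/
noncomputable def cEmb (p : MinorIndex ℓ) : Fin p.1.1.card ↪o Fin ℓ :=
  p.1.2.orderEmbOfFin p.2.symm

/-- The minor of the generic Hermitian matrix, as a polynomial. -/
noncomputable def minorPoly (q : ℕ) (K : Type*) [Field K] (p : MinorIndex ℓ) :
    MvPolynomial (HVar ℓ) K :=
  (Matrix.of fun a b : Fin p.1.1.card =>
    monomial (Finsupp.single (hv (rEmb p a) (cEmb p b)) (hexp q (rEmb p a) (cEmb p b)))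
      (1 : K)).det

/-- The exponent vector of the term of a minor corresponding to a permutation. -/
noncomputable def Dg (q : ℕ) (p : MinorIndex ℓ) (σ : Equiv.Perm (Fin p.1.1.card)) :
    HVar ℓ →₀ ℕ :=
  ∑ a, Finsupp.single (hv (rEmb p (σ a)) (cEmb p a)) (hexp q (rEmb p (σ a)) (cEmb p a))

/-- (x,y) is a position used by (p, σ). -/
def InPos (p : MinorIndex ℓ) (σ : Equiv.Perm (Fin p.1.1.card)) (x y : Fin ℓ) : Prop :=
  ∃ a, (rEmb p (σ a), cEmb p a) = (x, y)

lemma single_hv_apply (q : ℕ) (i j x y : Fin ℓ) (hxy : x ≤ y) :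
    (if hv i j = (⟨(x, y), hxy⟩ : HVar ℓ) then hexp q i j else 0) =
      (if (i, j) = (x, y) then 1 else 0) + (if x < y ∧ (i, j) = (y, x) then q else 0) := by
  by_cases h : i ≤ j
  · rw [hv, dif_pos h, hexp, if_pos h]
    have h2 : ¬(x < y ∧ (i, j) = (y, x)) := by
      rintro ⟨hlt, he⟩
      rw [Prod.mk.injEq] at he
      exact absurd (he.1 ▸ he.2 ▸ h) (not_le.2 hlt)
    rw [if_neg h2, add_zero]
    exact if_congr (by simp [Subtype.ext_iff]) rfl rfl
  · rw [hv, dif_neg h, hexp, if_neg h]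
    have hji : j < i := not_le.1 h
    have h1 : (i, j) ≠ (x, y) := by
      rintro he
      rw [Prod.mk.injEq] at he
      exact h (he.1 ▸ he.2 ▸ hxy)
    rw [if_neg h1, zero_add]
    refine if_congr ?_ rfl rfl
    constructor
    · intro he
      rw [Subtype.mk.injEq, Prod.mk.injEq] at he
      refine ⟨he.1 ▸ he.2 ▸ hji, ?_⟩
      rw [Prod.mk.injEq]
      exact ⟨he.2, he.1⟩
    · rintro ⟨hlt, he⟩
      rw [Prod.mk.injEq] at he
      rw [Subtype.mk.injEq, Prod.mk.injEq]
      exact ⟨he.2, he.1⟩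

lemma sum_ite_unique {α β : Type*} [Fintype α] [DecidableEq β] (g : α → β)
    (hg : Function.Injective g) (t : β) (e : ℕ) [Decidable (∃ a, g a = t)] :
    (∑ a, if g a = t then e else 0) = if ∃ a, g a = t then e else 0 := by
  by_cases h : ∃ a, g a = t
  · obtain ⟨a₀, ha₀⟩ := h
    rw [if_pos ⟨a₀, ha₀⟩, Finset.sum_eq_single a₀]
    · rw [if_pos ha₀]
    · intro b _ hb
      rw [if_neg]
      intro hbt
      exact hb (hg (hbt.trans ha₀.symm))
    · intro habs; exact absurd (Finset.mem_univ a₀) habs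
  · rw [if_neg h]
    apply Finset.sum_eq_zero
    intro a _
    rw [if_neg]
    exact fun ha => h ⟨a, ha⟩

lemma Dg_apply (q : ℕ) (p : MinorIndex ℓ) (σ : Equiv.Perm (Fin p.1.1.card)) {x y : Fin ℓ}
    (hxy : x ≤ y) :
    Dg q p σ ⟨(x, y), hxy⟩ =
      (if InPos p σ x y then 1 else 0) + (if x < y ∧ InPos p σ y x then q else 0) := by
  classical
  have hginj : Function.Injective (fun a => (rEmb p (σ a), cEmb p a)) := by
    intro a b hab
    exact (cEmb p).injective (congrArg Prod.snd hab)
  rw [Dg, Finset.sum_apply']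
  have step : ∀ a : Fin p.1.1.card,
      (Finsupp.single (hv (rEmb p (σ a)) (cEmb p a)) (hexp q (rEmb p (σ a)) (cEmb p a)))
          (⟨(x, y), hxy⟩ : HVar ℓ)
        = (if (rEmb p (σ a), cEmb p a) = (x, y) then 1 else 0)
          + (if x < y ∧ (rEmb p (σ a), cEmb p a) = (y, x) then q else 0) := by
    intro a
    rw [Finsupp.single_apply]
    exact single_hv_apply q _ _ x y hxy
  rw [Finset.sum_congr rfl fun a _ => step a, Finset.sum_add_distrib]
  congr 1
  · rw [sum_ite_unique _ hginj (x, y) 1]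
    exact if_congr Iff.rfl rfl rfl
  · by_cases hlt : x < y
    · simp only [hlt, true_and]
      rw [sum_ite_unique _ hginj (y, x) q]
      exact if_congr Iff.rfl rfl rfl
    · simp [hlt]

lemma inPos_iff_of_Dg_eq {q : ℕ} (hq2 : 2 ≤ q) {p p' : MinorIndex ℓ}
    {σ : Equiv.Perm (Fin p.1.1.card)} {σ' : Equiv.Perm (Fin p'.1.1.card)}
    (h : Dg q p σ = Dg q p' σ') (x y : Fin ℓ) :
    InPos p σ x y ↔ InPos p' σ' x y := by
  rcases lt_trichotomy x y with hlt | heq | hgt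
  · have hxy := le_of_lt hlt
    have e1 := Dg_apply q p σ hxy
    have e2 := Dg_apply q p' σ' hxy
    rw [h, e2] at e1
    simp only [hlt, true_and] at e1
    split_ifs at e1 <;> first | tauto | omega
  · subst heq
    have hxy : x ≤ x := le_rfl
    have e1 := Dg_apply q p σ hxy
    have e2 := Dg_apply q p' σ' hxy
    rw [h, e2] at e1
    simp only [lt_irrefl, false_and, if_false, add_zero] at e1
    split_ifs at e1 <;> first | tauto | omega
  · have hyx := le_of_lt hgt
    have e1 := Dg_apply q p σ hyx
    have e2 := Dg_apply q p' σ' hyx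
    rw [h, e2] at e1
    simp only [hgt, true_and] at e1
    split_ifs at e1 <;> first | tauto | omega

lemma mem_fst_iff (p : MinorIndex ℓ) (σ : Equiv.Perm (Fin p.1.1.card)) (x : Fin ℓ) :
    x ∈ p.1.1 ↔ ∃ y, InPos p σ x y := by
  constructor
  · intro hx
    have hx' : x ∈ Set.range (rEmb p) := by
      rw [rEmb, Finset.range_orderEmbOfFin]
      exact hx
    obtain ⟨b, hb⟩ := hx'
    exact ⟨cEmb p (σ⁻¹ b), ⟨σ⁻¹ b, by simp [hb]⟩⟩
  · rintro ⟨y, a, ha⟩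
    rw [Prod.mk.injEq] at ha
    rw [← ha.1, rEmb]
    exact Finset.orderEmbOfFin_mem _ _ _

lemma mem_snd_iff (p : MinorIndex ℓ) (σ : Equiv.Perm (Fin p.1.1.card)) (y : Fin ℓ) :
    y ∈ p.1.2 ↔ ∃ x, InPos p σ x y := by
  constructor
  · intro hy
    have hy' : y ∈ Set.range (cEmb p) := by
      rw [cEmb, Finset.range_orderEmbOfFin]
      exact hy
    obtain ⟨a, ha⟩ := hy'
    exact ⟨rEmb p (σ a), ⟨a, by simp [ha]⟩⟩
  · rintro ⟨x, a, ha⟩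
    rw [Prod.mk.injEq] at ha
    rw [← ha.2, cEmb]
    exact Finset.orderEmbOfFin_mem _ _ _

lemma minorIndex_eq_of_Dg_eq {q : ℕ} (hq2 : 2 ≤ q) {p p' : MinorIndex ℓ}
    {σ : Equiv.Perm (Fin p.1.1.card)} {σ' : Equiv.Perm (Fin p'.1.1.card)}
    (h : Dg q p σ = Dg q p' σ') : p = p' := by
  have hiff := inPos_iff_of_Dg_eq hq2 h
  refine Subtype.ext (Prod.ext ?_ ?_)
  · apply Finset.ext
    intro x
    rw [mem_fst_iff p σ x, mem_fst_iff p' σ' x]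
    exact exists_congr fun y => hiff x y
  · apply Finset.ext
    intro y
    rw [mem_snd_iff p σ y, mem_snd_iff p' σ' y]
    exact exists_congr fun x => hiff x y

lemma perm_eq_of_Dg_eq {q : ℕ} (hq2 : 2 ≤ q) {p : MinorIndex ℓ}
    {σ σ' : Equiv.Perm (Fin p.1.1.card)}
    (h : Dg q p σ = Dg q p σ') : σ = σ' := by
  have hiff := inPos_iff_of_Dg_eq hq2 h
  refine Equiv.ext fun a => ?_
  have h1 : InPos p σ (rEmb p (σ a)) (cEmb p a) := ⟨a, rfl⟩
  obtain ⟨b, hb⟩ := (hiff _ _).1 h1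
  rw [Prod.mk.injEq] at hb
  have hba : b = a := (cEmb p).injective hb.2
  subst hba
  exact ((rEmb p).injective hb.1).symm



open MvPolynomial

open scoped Classical in
lemma prod_monomial_one {ι τ K : Type*} [CommSemiring K] (s : Finset ι) (d : ι → (τ →₀ ℕ)) :
    (∏ i ∈ s, monomial (d i) (1 : K)) = monomial (∑ i ∈ s, d i) 1 := by
  induction s using Finset.cons_induction with
  | empty => simp
  | cons a s ha ih => rw [Finset.prod_cons, Finset.sum_cons, ih, monomial_mul, one_mul]

variable {ℓ : ℕ}

lemma minorPoly_eq (q : ℕ) (K : Type*) [Field K] (p : MinorIndex ℓ) :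
    minorPoly q K p = ∑ σ : Equiv.Perm (Fin p.1.1.card),
      C (((Equiv.Perm.sign σ : ℤ) : K)) * monomial (Dg q p σ) 1 := by
  rw [minorPoly, Matrix.det_apply']
  refine Finset.sum_congr rfl fun σ _ => ?_
  rw [← map_intCast (C : K →+* MvPolynomial (HVar ℓ) K)]
  congr 1
  simp only [Matrix.of_apply]
  rw [prod_monomial_one]
  rfl

lemma coeff_minorPoly {q : ℕ} (hq2 : 2 ≤ q) (K : Type*) [Field K] (p p' : MinorIndex ℓ) :
    coeff (Dg q p 1) (minorPoly q K p') = if p' = p then 1 else 0 := by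
  classical
  rw [minorPoly_eq, coeff_sum]
  simp only [coeff_C_mul, coeff_monomial]
  by_cases hp : p' = p
  · subst hp
    rw [if_pos rfl, Finset.sum_eq_single 1]
    · simp
    · intro σ _ hσ
      rw [if_neg (fun h => hσ (perm_eq_of_Dg_eq hq2 h)), mul_zero]
    · intro habs; exact absurd (Finset.mem_univ _) habs
  · rw [if_neg hp]
    refine Finset.sum_eq_zero fun σ _ => ?_
    rw [if_neg (fun h => hp (minorIndex_eq_of_Dg_eq hq2 h)), mul_zero]

lemma Dg_le {q : ℕ} (hq2 : 2 ≤ q) (p : MinorIndex ℓ) (σ : Equiv.Perm (Fin p.1.1.card))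
    (s : HVar ℓ) :
    Dg q p σ s ≤ if s.1.1 = s.1.2 then 1 else q + 1 := by
  classical
  obtain ⟨⟨x, y⟩, hxy⟩ := s
  rw [Dg_apply q p σ hxy]
  show _ ≤ if x = y then 1 else q + 1
  by_cases hd : x = y
  · subst hd
    simp only [lt_irrefl, false_and, if_false, add_zero, if_pos rfl]
    split_ifs <;> omega
  · rw [if_neg hd]
    split_ifs <;> omega

lemma eval_minorPoly (q : ℕ) {K : Type*} [Field K] (φ : HVar ℓ → K) (p : MinorIndex ℓ) :
    eval φ (minorPoly q K p)
      = minorAt (Matrix.of fun i j => φ (hv i j) ^ hexp q i j) p := by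
  rw [minorPoly, minorAt, RingHom.map_det]
  congr 1
  ext a b
  simp [Matrix.map_apply, eval_monomial, Finsupp.prod_single_index, rEmb, cEmb]

lemma exists_eval_ne_zero_herm {q ℓ : ℕ} {K : Type*} [Field K] [Fintype K]
    (hq2 : 2 ≤ q) (hK : Fintype.card K = q ^ 2) (f : MinorIndex ℓ → K) (p₀ : MinorIndex ℓ)
    (hp₀ : f p₀ ≠ 0) :
    ∃ H : {H : Matrix (Fin ℓ) (Fin ℓ) K // ∀ i j, H j i = (H i j) ^ q},
      (∑ p : MinorIndex ℓ, f p * minorAt H.1 p) ≠ 0 := by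
  classical
  set P : MvPolynomial (HVar ℓ) K := ∑ p, C (f p) * minorPoly q K p with hPdef
  have hcoeff : coeff (Dg q p₀ 1) P = f p₀ := by
    rw [hPdef, coeff_sum]
    rw [Finset.sum_congr rfl (fun p _ => by rw [coeff_C_mul, coeff_minorPoly hq2])]
    simp only [mul_ite, mul_one, mul_zero, Finset.sum_ite_eq', Finset.mem_univ, if_true]
  have hP : P ≠ 0 := fun h => hp₀ (by rw [← hcoeff, h, coeff_zero])
  have hDgmem : ∀ m, coeff m P ≠ 0 → ∃ p σ, Dg q p σ = m := by
    intro m hm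
    by_contra hno
    push_neg at hno
    apply hm
    rw [hPdef, coeff_sum]
    refine Finset.sum_eq_zero fun p _ => ?_
    rw [coeff_C_mul, minorPoly_eq, coeff_sum]
    rw [Finset.sum_eq_zero fun σ _ => ?_, mul_zero]
    rw [coeff_C_mul, coeff_monomial, if_neg (hno p σ), mul_zero]
  set S : HVar ℓ → Finset K := fun s => if s.1.1 = s.1.2 then ({0, 1} : Finset K) else
    Finset.univ with hSdef
  have hq0 : q ≠ 0 := by omega
  have hdeg : ∀ s, P.degreeOf s < (S s).card := by
    intro s
    have hb : P.degreeOf s ≤ (if s.1.1 = s.1.2 then 1 else q + 1) := by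
      rw [degreeOf_eq_sup]
      refine Finset.sup_le fun m hm => ?_
      obtain ⟨p, σ, rfl⟩ := hDgmem m (mem_support_iff.1 hm)
      exact Dg_le hq2 p σ s
    have hcard01 : ({0, 1} : Finset K).card = 2 := by
      rw [Finset.card_insert_of_notMem (by simp), Finset.card_singleton]
    have hqq : 2 * q ≤ q * q := Nat.mul_le_mul_right q hq2
    by_cases hdiag : s.1.1 = s.1.2
    · rw [if_pos hdiag] at hb
      rw [hSdef]
      simp only [if_pos hdiag, hcard01]
      omega
    · rw [if_neg hdiag] at hb
      rw [hSdef]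
      simp only [if_neg hdiag, Finset.card_univ, hK]
      have : q ^ 2 = q * q := by ring
      omega
  obtain ⟨φ, hmem, hval⟩ := exists_eval_ne_zero S P hP hdeg
  set Hm : Matrix (Fin ℓ) (Fin ℓ) K := Matrix.of fun i j => φ (hv i j) ^ hexp q i j with hHm
  have hdiagpow : ∀ i, φ (hv i i) ^ q = φ (hv i i) := by
    intro i
    have hmem' := hmem (hv i i)
    have hii : (hv i i).1.1 = (hv i i).1.2 := by rw [hv, dif_pos le_rfl]
    rw [hSdef] at hmem'
    simp only [if_pos hii] at hmem'
    rcases Finset.mem_insert.1 hmem' with h0 | h1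
    · rw [h0, zero_pow hq0]
    · rw [Finset.mem_singleton] at h1
      rw [h1, one_pow]
  have hqqpow : ∀ x : K, (x ^ q) ^ q = x := by
    intro x
    rw [← pow_mul]
    have h := FiniteField.pow_card x
    rw [hK, pow_two] at h
    exact h
  have herm : ∀ i j, Hm j i = (Hm i j) ^ q := by
    intro i j
    rcases lt_trichotomy i j with hij | rfl | hij
    · show φ (hv j i) ^ hexp q j i = (φ (hv i j) ^ hexp q i j) ^ q
      rw [hv, dif_neg (not_le.2 hij), hv, dif_pos (le_of_lt hij), hexp,
        if_neg (not_le.2 hij), hexp, if_pos (le_of_lt hij), pow_one]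
    · show φ (hv i i) ^ hexp q i i = (φ (hv i i) ^ hexp q i i) ^ q
      rw [hexp, if_pos le_rfl, pow_one]
      exact (hdiagpow i).symm
    · show φ (hv j i) ^ hexp q j i = (φ (hv i j) ^ hexp q i j) ^ q
      rw [hv, dif_pos (le_of_lt hij), hv, dif_neg (not_le.2 hij), hexp,
        if_pos (le_of_lt hij), hexp, if_neg (not_le.2 hij), pow_one]
      exact (hqqpow _).symm
  refine ⟨⟨Hm, herm⟩, ?_⟩
  have heval : ∑ p, f p * minorAt Hm p = eval φ P := by
    rw [hPdef, map_sum]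
    refine Finset.sum_congr rfl fun p _ => ?_
    rw [map_mul, eval_C, eval_minorPoly]
  rw [heval]
  exact hval


end Stmt15Aux

/-- The evaluation map is injective, and hence the affine Hermitian Grassmann code
    has dimension C(2ℓ, ℓ). -/
theorem stmt15 (q ℓ : ℕ) (hq : ∃ p n : ℕ, p.Prime ∧ 0 < n ∧ q = p ^ n) (hℓ : 1 ≤ ℓ)
    (K : Type*) [Field K] [Fintype K] (hK : Fintype.card K = q ^ 2) :
    Function.Injective (hermEval q ℓ K) ∧
      Module.finrank K (Submodule.span K (Set.range (hermEval q ℓ K)))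
        = Nat.choose (2 * ℓ) ℓ := by
  obtain ⟨pr, n, hpr, hn, hqeq⟩ := hq
  have hq2 : 2 ≤ q := by
    have h1 : 1 < pr ^ n := Nat.one_lt_pow hn.ne' hpr.one_lt
    omega
  have hinj : Function.Injective (hermEval q ℓ K) := by
    intro f g hfg
    by_contra hne
    obtain ⟨p₀, hp₀⟩ : ∃ p, (f - g) p ≠ 0 := by
      by_contra hker
      push_neg at hker
      refine hne (funext fun p => ?_)
      have h := hker p
      rwa [Pi.sub_apply, sub_eq_zero] at h
    obtain ⟨H, hH⟩ := Stmt15Aux.exists_eval_ne_zero_herm hq2 hK (f - g) p₀ hp₀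
    apply hH
    have hsplit : (∑ p : MinorIndex ℓ, (f - g) p * minorAt H.1 p)
        = hermEval q ℓ K f H - hermEval q ℓ K g H := by
      rw [hermEval, hermEval, ← Finset.sum_sub_distrib]
      refine Finset.sum_congr rfl fun p _ => ?_
      rw [Pi.sub_apply, sub_mul]
    rw [hsplit, hfg, sub_self]
  refine ⟨hinj, ?_⟩
  let L : (MinorIndex ℓ → K) →ₗ[K]
      ({H : Matrix (Fin ℓ) (Fin ℓ) K // ∀ i j, H j i = (H i j) ^ q} → K) :=
    { toFun := hermEval q ℓ K
      map_add' := by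
        intro f g
        funext H
        simp [hermEval, add_mul, Finset.sum_add_distrib]
      map_smul' := by
        intro c f
        funext H
        simp [hermEval, Finset.mul_sum, mul_assoc] }
  have hrange : Set.range (hermEval q ℓ K) = ↑(LinearMap.range L) := by
    rw [LinearMap.coe_range]
    rfl
  rw [hrange, Submodule.span_eq, LinearMap.finrank_range_of_inj hinj,
    Module.finrank_pi, Stmt15Aux.card_minorIndex]
end

section
/- Let q be a prime power, ℓ ≥ 1, and let C ⊆ F_{q^2}^{q^{ℓ²}} be the affine Hermitian Grassmann code (evaluations of F_{q^2}-linear combinations of minors of the generic Hermitian matrix at all ℓ×ℓ Hermitian matrices over F_{q^2}). Then C^q = C, where C^q = {(c₁^q,…,cₙ^q) : c ∈ C}; consequently C has a basis of codewords with all entries in F_q. -/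
/- auxiliary -/

def swapIdx {ℓ : ℕ} (p : MinorIndex ℓ) : MinorIndex ℓ := ⟨(p.1.2, p.1.1), p.2.symm⟩

lemma swapIdx_swapIdx {ℓ : ℕ} (p : MinorIndex ℓ) : swapIdx (swapIdx p) = p := by
  rcases p with ⟨⟨I, J⟩, h⟩; rfl

def swapEquiv (ℓ : ℕ) : MinorIndex ℓ ≃ MinorIndex ℓ :=
  ⟨swapIdx, swapIdx, swapIdx_swapIdx, swapIdx_swapIdx⟩

lemma orderEmb_cast {α : Type*} [LinearOrder α] (s : Finset α) {m n : ℕ}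
    (h1 : s.card = m) (h2 : s.card = n) (a : Fin m) :
    s.orderEmbOfFin h1 a = s.orderEmbOfFin h2 (Fin.cast (h1.symm.trans h2) a) := by
  subst h1; subst h2; rfl

lemma minor_pow {K : Type*} [Field K] {q ℓ : ℕ} (σ : K →+* K) (hσ : ∀ x, σ x = x ^ q)
    (H : Matrix (Fin ℓ) (Fin ℓ) K) (hH : ∀ i j, H j i = H i j ^ q) (p : MinorIndex ℓ) :
    (minorAt H p) ^ q = minorAt H (swapIdx p) := by
  rw [← hσ, minorAt, RingHom.map_det, RingHom.mapMatrix_apply]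
  rw [show minorAt H (swapIdx p) =
      (Matrix.of fun a b : Fin p.1.2.card =>
        H (p.1.2.orderEmbOfFin rfl a) (p.1.1.orderEmbOfFin p.2 b)).det from rfl]
  rw [← Matrix.det_transpose ((Matrix.of fun a b : Fin p.1.1.card =>
      H (p.1.1.orderEmbOfFin rfl a) (p.1.2.orderEmbOfFin p.2.symm b)).map σ)]
  rw [← Matrix.det_reindex_self (finCongr p.2) (Matrix.transpose ((Matrix.of fun a b : Fin p.1.1.card =>
      H (p.1.1.orderEmbOfFin rfl a) (p.1.2.orderEmbOfFin p.2.symm b)).map σ))]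
  congr 1
  ext a b
  simp only [Matrix.reindex_apply, Matrix.submatrix_apply, Matrix.transpose_apply,
    RingHom.mapMatrix_apply, Matrix.map_apply, Matrix.of_apply, hσ, ← hH,
    finCongr_symm, finCongr_apply]
  rw [orderEmb_cast p.1.2 rfl p.2.symm a, orderEmb_cast p.1.1 p.2 rfl b]

lemma hermEval_pow {q ℓ : ℕ} {K : Type*} [Field K] (σ : K →+* K) (hσ : ∀ x, σ x = x ^ q)
    (f : MinorIndex ℓ → K)
    (H : {H : Matrix (Fin ℓ) (Fin ℓ) K // ∀ i j, H j i = (H i j) ^ q}) :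
    (hermEval q ℓ K f H) ^ q = hermEval q ℓ K (fun p => f (swapIdx p) ^ q) H := by
  rw [← hσ, hermEval, map_sum, hermEval,
    ← Equiv.sum_comp (swapEquiv ℓ) (fun p => f (swapIdx p) ^ q * minorAt H.1 p)]
  apply Finset.sum_congr rfl
  intro p _
  rw [map_mul, hσ (f p), hσ (minorAt H.1 p), minor_pow σ hσ H.1 H.2 p]
  show f p ^ q * minorAt H.1 (swapIdx p) = f (swapIdx (swapEquiv ℓ p)) ^ q * minorAt H.1 (swapEquiv ℓ p)
  rw [show swapEquiv ℓ p = swapIdx p from rfl, swapIdx_swapIdx]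

/-- The affine Hermitian Grassmann code C satisfies C^q = C (entrywise q-th power),
    and consequently C has a basis of codewords all of whose entries lie in F_q. -/
theorem stmt16 (q ℓ : ℕ) (hq : ∃ p n : ℕ, p.Prime ∧ 0 < n ∧ q = p ^ n) (hℓ : 1 ≤ ℓ)
    (K : Type*) [Field K] [Fintype K] (hK : Fintype.card K = q ^ 2) :
    (fun c : {H : Matrix (Fin ℓ) (Fin ℓ) K // ∀ i j, H j i = (H i j) ^ q} → K =>
        fun H => (c H) ^ q) ''
      (Submodule.span K (Set.range (hermEval q ℓ K)) : Set _)
      = (Submodule.span K (Set.range (hermEval q ℓ K)) : Set _)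
    ∧ ∃ s : Set ({H : Matrix (Fin ℓ) (Fin ℓ) K // ∀ i j, H j i = (H i j) ^ q} → K),
        s ⊆ (Submodule.span K (Set.range (hermEval q ℓ K)) : Set _)
        ∧ (∀ c ∈ s, ∀ H, (c H) ^ q = c H)
        ∧ LinearIndependent K (Subtype.val : s → _)
        ∧ Submodule.span K s = Submodule.span K (Set.range (hermEval q ℓ K)) := by
  obtain ⟨p, n, hp, hn, hqe⟩ := hq
  haveI : Fact p.Prime := ⟨hp⟩
  have hq2 : 2 ≤ q := by
    rw [hqe]; calc 2 = 2 ^ 1 := rfl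
    _ ≤ p ^ 1 := by simpa using hp.two_le
    _ ≤ p ^ n := Nat.pow_le_pow_right hp.pos hn
  have hq0 : q ≠ 0 := by omega
  -- characteristic of K is p
  haveI hcharp : CharP K p := by
    haveI : CharP K (ringChar K) := ringChar.charP K
    obtain ⟨m, hrp, hcard⟩ := FiniteField.card K (ringChar K)
    have hpr : p = ringChar K := by
      have hdvd : p ∣ ringChar K ^ (m : ℕ) := by
        rw [← hcard, hK, hqe, ← pow_mul]
        exact dvd_pow_self p (by positivity)
      exact (Nat.prime_dvd_prime_iff_eq hp hrp).mp (hp.dvd_of_dvd_pow hdvd)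
    rw [hpr]; exact ringChar.charP K
  -- the q-power ring hom
  have hσex : ∃ σ : K →+* K, ∀ x, σ x = x ^ q := by
    subst hqe
    exact ⟨{ toFun := (· ^ p ^ n), map_one' := one_pow _,
             map_mul' := fun x y => mul_pow x y _,
             map_zero' := zero_pow hq0,
             map_add' := fun x y => add_pow_char_pow x y p n }, fun _ => rfl⟩
  obtain ⟨σ, hσ⟩ := hσex
  have hqq : ∀ x : K, (x ^ q) ^ q = x := by
    intro x
    rw [← pow_mul, ← pow_two, ← hK]
    exact FiniteField.pow_card x
  set S := Submodule.span K (Set.range (hermEval q ℓ K)) with hS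
  -- claim A : S is stable under φ
  have hmem : ∀ c ∈ S, (fun H => c H ^ q) ∈ S := by
    intro c hc
    induction hc using Submodule.span_induction with
    | mem x hx =>
        obtain ⟨f, rfl⟩ := hx
        apply Submodule.subset_span
        exact ⟨fun p => f (swapIdx p) ^ q, by
          funext H; exact (hermEval_pow σ hσ f H).symm⟩
    | zero =>
        have he : (fun H => (0 : {H : Matrix (Fin ℓ) (Fin ℓ) K // ∀ i j, H j i = (H i j) ^ q} → K) H ^ q) = 0 := by
          funext H; simp [zero_pow hq0]
        rw [he]; exact S.zero_mem
    | add x y hx hy ihx ihy =>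
        have he : (fun H => (x + y) H ^ q) = (fun H => x H ^ q) + (fun H => y H ^ q) := by
          funext H
          show (x H + y H) ^ q = x H ^ q + y H ^ q
          rw [← hσ, ← hσ, ← hσ, map_add]
        rw [he]; exact S.add_mem ihx ihy
    | smul a x hx ih =>
        have he : (fun H => (a • x) H ^ q) = (a ^ q) • (fun H => x H ^ q) := by
          funext H
          show (a * x H) ^ q = a ^ q * x H ^ q
          exact mul_pow a (x H) q
        rw [he]; exact S.smul_mem _ ih
  -- existence of a non-fixed element
  obtain ⟨β, hβ⟩ : ∃ β : K, β ^ q ≠ β := by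
    by_contra hall
    push_neg at hall
    have hne : (Polynomial.X ^ q - Polynomial.X : Polynomial K) ≠ 0 :=
      FiniteField.X_pow_card_sub_X_ne_zero K hq2
    have hsub : (Finset.univ : Finset K).val ⊆
        (Polynomial.X ^ q - Polynomial.X : Polynomial K).roots := by
      intro x _
      refine Polynomial.mem_roots'.mpr ⟨hne, ?_⟩
      simp [Polynomial.IsRoot, hall x]
    have hle := Polynomial.card_le_degree_of_subset_roots hsub
    rw [FiniteField.X_pow_card_sub_X_natDegree_eq K hq2, Finset.card_univ, hK] at hle
    nlinarith
  have hβne : β - β ^ q ≠ 0 := sub_ne_zero.mpr (Ne.symm hβ)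
  set F : Set ({H : Matrix (Fin ℓ) (Fin ℓ) K // ∀ i j, H j i = (H i j) ^ q} → K) :=
    {c | c ∈ S ∧ ∀ H, c H ^ q = c H} with hF
  have hFS : Submodule.span K F = S := by
    apply le_antisymm
    · rw [Submodule.span_le]; intro c hc; exact hc.1
    · intro c hc
      have hφc := hmem c hc
      have huF : (c + fun H => c H ^ q) ∈ F := by
        refine ⟨S.add_mem hc hφc, fun H => ?_⟩
        show (c H + c H ^ q) ^ q = c H + c H ^ q
        rw [← hσ, map_add, hσ, hσ, hqq, add_comm]
      have hvF : (β • c + fun H => (β • c) H ^ q) ∈ F := by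
        refine ⟨S.add_mem (S.smul_mem β hc) (hmem _ (S.smul_mem β hc)), fun H => ?_⟩
        show ((β • c) H + (β • c) H ^ q) ^ q = (β • c) H + (β • c) H ^ q
        rw [← hσ, map_add, hσ, hσ, hqq, add_comm]
      have hcw : c = (β - β ^ q)⁻¹ •
          ((β • c + fun H => (β • c) H ^ q) - (β ^ q) • (c + fun H => c H ^ q)) := by
        funext H
        show c H = (β - β ^ q)⁻¹ * ((β * c H + (β * c H) ^ q) - β ^ q * (c H + c H ^ q))
        rw [mul_pow]
        field_simp
        ring
      rw [hcw]
      exact Submodule.smul_mem _ _ (Submodule.sub_mem _ (Submodule.subset_span hvF)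
        (Submodule.smul_mem _ _ (Submodule.subset_span huF)))
  constructor
  · ext c
    simp only [Set.mem_image, SetLike.mem_coe]
    constructor
    · rintro ⟨d, hd, rfl⟩
      exact hmem d hd
    · intro hc
      exact ⟨fun H => c H ^ q, hmem c hc, funext fun H => hqq (c H)⟩
  · obtain ⟨s, hs1, hs2, hs3⟩ := exists_linearIndependent K F
    refine ⟨s, fun c hc => (hs1 hc).1, fun c hc H => (hs1 hc).2 H, hs3, ?_⟩
    rw [hs2]
    exact hFS
end

section
/- Let q be a prime power, ℓ ≥ 1, and let I_H be the ideal in F_{q^2}[X_{i,j} : 1 ≤ i,j ≤ ℓ] generated by X_{i,j}^q − X_{j,i} and X_{i,j}^{q²} − X_{i,j} for i < j, together with X_{i,i}^q − X_{i,i}. Let F(ℓ) be the F_{q^2}-span of all minors det_{I,J}(X), I,J ⊆ [ℓ], |I| = |J|. Then F(ℓ) ∩ I_H = {0}. -/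
open MvPolynomial

namespace Stmt18Aux

lemma prod_X_pow_eq {K : Type*} [CommSemiring K] {σ σ' : Type*} (s : Finset σ')
    (h : σ' → σ) (e : σ' → ℕ) :
    (∏ a ∈ s, (X (h a) : MvPolynomial σ K) ^ e a)
      = monomial (∑ a ∈ s, Finsupp.single (h a) (e a)) 1 := by
  classical
  induction s using Finset.induction with
  | empty => rw [Finset.prod_empty, Finset.sum_empty, monomial_zero', C_1]
  | @insert x s hx ih =>
      rw [Finset.prod_insert hx, Finset.sum_insert hx, ih, X_pow_eq_monomial,
        monomial_mul, one_mul]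

lemma sum_ite_le_one {α β : Type*} [DecidableEq β] [Fintype α] (h : α → β)
    (hinj : Function.Injective h) (p : β) :
    (∑ i, if h i = p then 1 else 0 : ℕ) ≤ 1 := by
  classical
  by_cases hex : ∃ i, h i = p
  · obtain ⟨i₀, hi₀⟩ := hex
    have hiff : ∀ i, (h i = p) ↔ (i = i₀) := by
      intro i
      constructor
      · intro hi; exact hinj (hi.trans hi₀.symm)
      · rintro rfl; exact hi₀
    simp only [hiff]
    rw [Finset.sum_ite_eq' Finset.univ i₀ (fun _ => 1)]
    simp
  · push_neg at hex
    simp [hex]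

variable (q ℓ : ℕ)

def τ (p : Fin ℓ × Fin ℓ) : Fin ℓ × Fin ℓ := if p.2 < p.1 then (p.2, p.1) else p

def wt (p : Fin ℓ × Fin ℓ) : ℕ := if p.2 < p.1 then q else if p.1 = p.2 then q + 1 else 1

noncomputable def T (m : Fin ℓ × Fin ℓ →₀ ℕ) : Fin ℓ × Fin ℓ →₀ ℕ :=
  ∑ p ∈ m.support, Finsupp.single (τ ℓ p) (wt q ℓ p * m p)

lemma T_apply (m : Fin ℓ × Fin ℓ →₀ ℕ) (r : Fin ℓ × Fin ℓ) :
    T q ℓ m r = ∑ p : Fin ℓ × Fin ℓ, if τ ℓ p = r then wt q ℓ p * m p else 0 := by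
  classical
  rw [T, Finsupp.finset_sum_apply]
  rw [Finset.sum_subset (Finset.subset_univ m.support)]
  · exact Finset.sum_congr rfl fun p _ => Finsupp.single_apply
  · intro p _ hp
    rw [Finsupp.notMem_support_iff.mp hp]
    simp

lemma T_apply_upper (m : Fin ℓ × Fin ℓ →₀ ℕ) (i j : Fin ℓ) (hij : i < j) :
    T q ℓ m (i, j) = m (i, j) + q * m (j, i) := by
  classical
  rw [T_apply]
  have hne : ((i, j) : Fin ℓ × Fin ℓ) ≠ (j, i) := by
    intro h; exact absurd (congrArg Prod.fst h) (ne_of_lt hij)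
  rw [← Finset.sum_subset (Finset.subset_univ ({(i, j), (j, i)} : Finset (Fin ℓ × Fin ℓ)))]
  · rw [Finset.sum_pair hne]
    have h1 : τ ℓ (i, j) = (i, j) := by simp [τ, not_lt_of_gt hij]
    have h2 : τ ℓ (j, i) = (i, j) := by simp [τ, hij]
    have h3 : wt q ℓ (i, j) = 1 := by simp [wt, not_lt_of_gt hij, (ne_of_lt hij)]
    have h4 : wt q ℓ (j, i) = q := by simp [wt, hij]
    rw [if_pos h1, if_pos h2, h3, h4, one_mul]
  · intro p _ hp
    rw [if_neg]
    intro hτ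
    apply hp
    simp only [Finset.mem_insert, Finset.mem_singleton]
    unfold τ at hτ
    split_ifs at hτ with h
    · right
      obtain ⟨a, b⟩ := p
      simp only [Prod.mk.injEq] at hτ ⊢
      exact ⟨hτ.2, hτ.1⟩
    · left; exact hτ

lemma T_apply_diag (m : Fin ℓ × Fin ℓ →₀ ℕ) (i : Fin ℓ) :
    T q ℓ m (i, i) = (q + 1) * m (i, i) := by
  classical
  rw [T_apply]
  rw [Finset.sum_eq_single (i, i)]
  · have h1 : τ ℓ (i, i) = (i, i) := by simp [τ]
    have h3 : wt q ℓ (i, i) = q + 1 := by simp [wt]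
    rw [if_pos h1, h3]
  · intro p _ hp
    rw [if_neg]
    intro hτ
    apply hp
    unfold τ at hτ
    split_ifs at hτ with h
    · obtain ⟨a, b⟩ := p
      simp only [Prod.mk.injEq] at hτ
      exact absurd (hτ.1.trans hτ.2.symm) (ne_of_lt h)
    · exact hτ
  · intro h; exact absurd (Finset.mem_univ _) h

lemma T_apply_lower (m : Fin ℓ × Fin ℓ →₀ ℕ) (i j : Fin ℓ) (hij : j < i) :
    T q ℓ m (i, j) = 0 := by
  classical
  rw [T_apply]
  apply Finset.sum_eq_zero
  intro p _
  rw [if_neg]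
  intro hτ
  unfold τ at hτ
  split_ifs at hτ with h
  · obtain ⟨a, b⟩ := p
    simp only [Prod.mk.injEq] at hτ
    rw [hτ.1, hτ.2] at h
    exact absurd h (not_lt_of_gt hij)
  · rw [hτ] at h
    exact h hij

lemma T_le (m : Fin ℓ × Fin ℓ →₀ ℕ) (hm : ∀ p, m p ≤ 1) (r : Fin ℓ × Fin ℓ) :
    T q ℓ m r ≤ q + 1 := by
  obtain ⟨i, j⟩ := r
  rcases lt_trichotomy i j with h | h | h
  · rw [T_apply_upper q ℓ m i j h]
    calc m (i, j) + q * m (j, i) ≤ 1 + q * 1 :=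
          Nat.add_le_add (hm _) (Nat.mul_le_mul_left q (hm _))
      _ = q + 1 := by ring
  · subst h
    rw [T_apply_diag]
    calc (q + 1) * m (i, i) ≤ (q + 1) * 1 := Nat.mul_le_mul_left _ (hm _)
      _ = q + 1 := by ring
  · rw [T_apply_lower q ℓ m i j h]; exact Nat.zero_le _

lemma T_inj (m m' : Fin ℓ × Fin ℓ →₀ ℕ) (hm : ∀ p, m p ≤ 1) (hm' : ∀ p, m' p ≤ 1)
    (hq : 2 ≤ q) (h : T q ℓ m = T q ℓ m') : m = m' := by
  have key : ∀ i j : Fin ℓ, i < j → m (i, j) = m' (i, j) ∧ m (j, i) = m' (j, i) := by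
    intro i j hij
    have e := congrArg (fun t => t (i, j)) h
    rw [T_apply_upper q ℓ m i j hij, T_apply_upper q ℓ m' i j hij] at e
    have b1 := hm (i, j); have b2 := hm (j, i)
    have b3 := hm' (i, j); have b4 := hm' (j, i)
    interval_cases h1 : m (j, i) <;> interval_cases h2 : m' (j, i) <;> omega
  ext r
  obtain ⟨i, j⟩ := r
  rcases lt_trichotomy i j with hij | hij | hij
  · exact (key i j hij).1
  · subst hij
    have e := congrArg (fun t => t (i, i)) h
    rw [T_apply_diag, T_apply_diag] at e
    exact Nat.eq_of_mul_eq_mul_left (Nat.succ_pos q) e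
  · exact (key j i hij).2

noncomputable def ψ (K : Type*) [CommSemiring K] :
    MvPolynomial (Fin ℓ × Fin ℓ) K →ₐ[K] MvPolynomial (Fin ℓ × Fin ℓ) K :=
  aeval fun p => X (τ ℓ p) ^ wt q ℓ p

lemma ψ_monomial {K : Type*} [CommSemiring K] (m : Fin ℓ × Fin ℓ →₀ ℕ) (c : K) :
    ψ q ℓ K (monomial m c) = monomial (T q ℓ m) c := by
  rw [ψ, aeval_monomial]
  have h1 : (m.prod fun p k => (X (τ ℓ p) ^ wt q ℓ p : MvPolynomial (Fin ℓ × Fin ℓ) K) ^ k)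
      = monomial (T q ℓ m) 1 := by
    rw [Finsupp.prod]
    calc (∏ p ∈ m.support, ((X (τ ℓ p) ^ wt q ℓ p : MvPolynomial (Fin ℓ × Fin ℓ) K)) ^ m p)
        = ∏ p ∈ m.support, (X (τ ℓ p) : MvPolynomial (Fin ℓ × Fin ℓ) K) ^ (wt q ℓ p * m p) :=
          Finset.prod_congr rfl fun p _ => by rw [pow_mul]
      _ = monomial (T q ℓ m) 1 := by rw [prod_X_pow_eq, T]
  rw [h1, algebraMap_eq, C_mul_monomial, mul_one]

lemma ψ_rep {K : Type*} [CommSemiring K] (f : MvPolynomial (Fin ℓ × Fin ℓ) K) :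
    ψ q ℓ K f = ∑ m ∈ f.support, monomial (T q ℓ m) (coeff m f) := by
  conv_lhs => rw [f.as_sum, map_sum]
  exact Finset.sum_congr rfl fun m _ => ψ_monomial q ℓ m (coeff m f)

end Stmt18Aux

open Stmt18Aux

/-- The span of the minors of the generic matrix meets the Hermitian ideal I_H
    only in 0. -/
theorem stmt18 (q ℓ : ℕ) (hq : ∃ p n : ℕ, p.Prime ∧ 0 < n ∧ q = p ^ n) (hℓ : 1 ≤ ℓ)
    (K : Type*) [Field K] [Fintype K] (hK : Fintype.card K = q ^ 2)
    (f : MvPolynomial (Fin ℓ × Fin ℓ) K)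
    (hspan : f ∈ Submodule.span K
      {g : MvPolynomial (Fin ℓ × Fin ℓ) K |
        ∃ (I J : Finset (Fin ℓ)) (h : I.card = J.card),
          g = (Matrix.of fun a b : Fin I.card =>
            (X (I.orderEmbOfFin rfl a, J.orderEmbOfFin h.symm b) :
              MvPolynomial (Fin ℓ × Fin ℓ) K)).det})
    (hideal : f ∈ Ideal.span
      ({g | ∃ i j : Fin ℓ, i < j ∧
          (g = X (i, j) ^ q - X (j, i) ∨ g = X (i, j) ^ (q ^ 2) - X (i, j))}
        ∪ {g | ∃ i : Fin ℓ, g = X (i, i) ^ q - X (i, i)} :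
        Set (MvPolynomial (Fin ℓ × Fin ℓ) K))) :
    f = 0 := by
  classical
  -- q ≥ 2
  have hq2 : 2 ≤ q := by
    obtain ⟨p, n, hp, hn, rfl⟩ := hq
    calc 2 ≤ p := hp.two_le
      _ ≤ p ^ n := Nat.le_self_pow hn.ne' p
  have hxq : ∀ x : K, x ^ q ^ 2 = x := by
    intro x; rw [← hK]; exact FiniteField.pow_card x
  -- multilinearity of f
  have hml : ∀ m ∈ f.support, ∀ p, m p ≤ 1 := by
    have hsub : Submodule.span K
        {g : MvPolynomial (Fin ℓ × Fin ℓ) K |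
          ∃ (I J : Finset (Fin ℓ)) (h : I.card = J.card),
            g = (Matrix.of fun a b : Fin I.card =>
              (X (I.orderEmbOfFin rfl a, J.orderEmbOfFin h.symm b) :
                MvPolynomial (Fin ℓ × Fin ℓ) K)).det} ≤
        ({ carrier := {g : MvPolynomial (Fin ℓ × Fin ℓ) K | ∀ m ∈ g.support, ∀ p, m p ≤ 1}
           add_mem' := by
             intro a b ha hb m hm p
             rcases Finset.mem_union.mp (MvPolynomial.support_add hm) with h | h
             · exact ha m h p
             · exact hb m h p
           zero_mem' := by
             intro m hm
             simp at hm
           smul_mem' := by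
             intro c a ha m hm p
             exact ha m (MvPolynomial.support_smul hm) p } : Submodule K _) := by
      apply Submodule.span_le.mpr
      rintro g ⟨I, J, h, rfl⟩
      intro m hm p
      rw [Matrix.det_apply] at hm
      obtain ⟨σg, -, hm2⟩ := Finset.mem_biUnion.mp (MvPolynomial.support_sum hm)
      have hprod : (∏ i, (Matrix.of fun a b : Fin I.card =>
            (X (I.orderEmbOfFin rfl a, J.orderEmbOfFin h.symm b) :
              MvPolynomial (Fin ℓ × Fin ℓ) K)) (σg i) i)
          = monomial (∑ i : Fin I.card,
              Finsupp.single (I.orderEmbOfFin rfl (σg i), J.orderEmbOfFin h.symm i) 1) 1 := by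
        rw [← prod_X_pow_eq Finset.univ
          (fun i : Fin I.card => (I.orderEmbOfFin rfl (σg i), J.orderEmbOfFin h.symm i))
          (fun _ => 1)]
        exact Finset.prod_congr rfl fun i _ => by rw [pow_one, Matrix.of_apply]
      have hmem : m ∈ (monomial (∑ i : Fin I.card,
          Finsupp.single (I.orderEmbOfFin rfl (σg i), J.orderEmbOfFin h.symm i) 1)
            (1 : K)).support := by
        rcases Int.units_eq_one_or (Equiv.Perm.sign σg) with h1 | h1 <;>
          rw [h1] at hm2 <;> rw [hprod] at hm2
        · simpa using hm2
        · simpa [MvPolynomial.support_neg] using hm2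
      have hmeq : m = ∑ i : Fin I.card,
          Finsupp.single (I.orderEmbOfFin rfl (σg i), J.orderEmbOfFin h.symm i) 1 :=
        Finset.mem_singleton.mp (MvPolynomial.support_monomial_subset hmem)
      rw [hmeq, Finsupp.finset_sum_apply]
      calc (∑ i : Fin I.card,
            Finsupp.single (I.orderEmbOfFin rfl (σg i), J.orderEmbOfFin h.symm i) 1 p)
          = ∑ i : Fin I.card,
            if (I.orderEmbOfFin rfl (σg i), J.orderEmbOfFin h.symm i) = p then 1 else 0 :=
            Finset.sum_congr rfl fun i _ => Finsupp.single_apply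
        _ ≤ 1 := by
            apply sum_ite_le_one
            intro i i' hii'
            exact (J.orderEmbOfFin h.symm).injective (congrArg Prod.snd hii')
    exact hsub hspan
  -- ψ f vanishes everywhere
  have hvanish : ∀ v : (Fin ℓ × Fin ℓ) → K, eval v (ψ q ℓ K f) = 0 := by
    intro v
    set w : (Fin ℓ × Fin ℓ) → K := fun p => v (τ ℓ p) ^ wt q ℓ p with hw
    have hcomp : eval v (ψ q ℓ K f) = eval w f := by
      have harg : (⇑(eval v) ∘ fun p => (X (τ ℓ p) ^ wt q ℓ p : MvPolynomial (Fin ℓ × Fin ℓ) K)) = w := by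
        funext p
        simp [hw, Function.comp]
      rw [ψ, aeval_def, algebraMap_eq, ← eval_assoc, harg]
    rw [hcomp]
    have hker : Ideal.span
        ({g | ∃ i j : Fin ℓ, i < j ∧
            (g = X (i, j) ^ q - X (j, i) ∨ g = X (i, j) ^ (q ^ 2) - X (i, j))}
          ∪ {g | ∃ i : Fin ℓ, g = X (i, i) ^ q - X (i, i)} :
          Set (MvPolynomial (Fin ℓ × Fin ℓ) K)) ≤ RingHom.ker (eval w) := by
      rw [Ideal.span_le]
      rintro g (⟨i, j, hij, hg | hg⟩ | ⟨i, hg⟩) <;> subst hg <;>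
        simp only [SetLike.mem_coe, RingHom.mem_ker, map_sub, map_pow, eval_X]
      · have h1 : w (i, j) = v (i, j) := by
          simp [hw, τ, wt, not_lt_of_gt hij, (ne_of_lt hij)]
        have h2 : w (j, i) = v (i, j) ^ q := by
          simp [hw, τ, wt, hij]
        rw [h1, h2, sub_self]
      · have h1 : w (i, j) = v (i, j) := by
          simp [hw, τ, wt, not_lt_of_gt hij, (ne_of_lt hij)]
        rw [h1, hxq, sub_self]
      · have h1 : w (i, i) = v (i, i) ^ (q + 1) := by
          simp [hw, τ, wt]
        rw [h1, ← pow_mul]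
        have h2 : (q + 1) * q = q ^ 2 + q := by ring
        rw [h2, pow_add, hxq, ← pow_succ']
        exact sub_self _
    exact RingHom.mem_ker.mp (hker hideal)
  -- support bound for ψ f
  have hsupp : ∀ s ∈ (ψ q ℓ K f).support, ∀ r, s r ≤ q + 1 := by
    intro s hs r
    rw [ψ_rep] at hs
    obtain ⟨m, hm, hs2⟩ := Finset.mem_biUnion.mp (MvPolynomial.support_sum hs)
    have : s = T q ℓ m := Finset.mem_singleton.mp (MvPolynomial.support_monomial_subset hs2)
    rw [this]
    exact T_le q ℓ m (hml m hm) r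
  -- ψ f = 0 via finite-field vanishing
  have hψ0 : ψ q ℓ K f = 0 := by
    have hq1 : q + 1 ≤ Fintype.card K - 1 := by
      have h2q : 2 * q ≤ q * q := Nat.mul_le_mul_right q hq2
      have : q ^ 2 = q * q := sq q
      omega
    set e : (Fin ℓ × Fin ℓ) ≃ ULift (Fin ℓ × Fin ℓ) := Equiv.ulift.symm with he
    have hg0 : rename (⇑e) (ψ q ℓ K f) = 0 := by
      apply MvPolynomial.eq_zero_of_eval_eq_zero
      · intro v
        rw [eval_rename]
        exact hvanish _
      · rw [mem_restrictDegree]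
        intro s hs i
        rw [MvPolynomial.support_rename_of_injective e.injective] at hs
        obtain ⟨m, hm, rfl⟩ := Finset.mem_image.mp hs
        rw [Finsupp.mapDomain_equiv_apply]
        exact le_trans (hsupp m hm _) hq1
    have := MvPolynomial.rename_injective (R := K) (⇑e) e.injective
    apply this
    rw [hg0, map_zero]
  -- extract coefficients
  by_contra hf
  obtain ⟨m₀, hm₀⟩ := Finset.nonempty_iff_ne_empty.mpr
    (fun h => hf (MvPolynomial.support_eq_empty.mp h))
  have hc : coeff (T q ℓ m₀) (ψ q ℓ K f) = coeff m₀ f := by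
    rw [ψ_rep, coeff_sum]
    rw [Finset.sum_eq_single m₀]
    · rw [coeff_monomial, if_pos rfl]
    · intro m hm hne
      rw [coeff_monomial, if_neg]
      intro hT
      exact hne (T_inj q ℓ m m₀ (hml m hm) (hml m₀ hm₀) hq2 hT)
    · intro h; exact absurd hm₀ h
  rw [hψ0] at hc
  simp only [coeff_zero] at hc
  exact (MvPolynomial.mem_support_iff.mp hm₀) hc.symm
end
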